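/- arXiv:1408.4074 — 2 statements merged into one kernel-verified Lean document; each statement's English description precedes it below -/
import Mathlib

section
/- Let (C',φ) be the branch shift of x to y applied to a tree position (C,φ) of G, and let Q be the common branch shift quotient graph (so that Q' = Q with the part identifications P_0' = P_0, P_{i+2}' = P_{i+2}, P_{i+1}' = P_1, P_t' = P_{t+1} for 1 ≤ t ≤ i). Then the identity-map TILO ordering on Q defined by (C',φ) is the result of starting with the identity-map TILO ordering defined by (C,φ) and cyclically shifting the vertex at position 1 to position i+1; that is, the ordering (u_0, u_1, …, u_{i+2}) is replaced by (u_0, u_2, u_3, …, u_i, u_{i+1}, u_1, u_{i+2}). -/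
attribute [local instance] Classical.propDecidable

open SimpleGraph

/-! ### Weighted graphs -/

/-- Total weight `w(A,B)` between two vertex sets. -/
noncomputable def setW {V : Type*} [Fintype V] (w : V → V → ℝ) (A B : Set V) : ℝ :=
  ∑ a ∈ A.toFinset, ∑ b ∈ B.toFinset, w a b

/-- The weight of an undirected edge of the weighted graph. -/
noncomputable def sym2w {V : Type*} (w : V → V → ℝ) : Sym2 V → ℝ :=
  Sym2.lift ⟨fun a b => (w a b + w b a) / 2, fun a b => by ring⟩

/-! ### 3-Cayley trees and tree positions -/

/-- A boundary (leaf) vertex of a tree. -/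
def IsLeaf {W : Type*} (C : SimpleGraph W) (z : W) : Prop := (C.neighborSet z).ncard = 1

/-- A 3-Cayley tree: a tree all of whose vertices have degree 1 (boundary) or 3 (interior). -/
def IsCayley {W : Type*} (C : SimpleGraph W) : Prop :=
  C.IsTree ∧ ∀ z : W, (C.neighborSet z).ncard = 1 ∨ (C.neighborSet z).ncard = 3

/-- `(C, φ)` is a tree position for a graph with vertex set `V`. -/
def IsTreePosition {V W : Type*} (C : SimpleGraph W) (φ : V → W) : Prop :=
  IsCayley C ∧ Function.Injective φ ∧ Set.range φ = {z | IsLeaf C z}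

/-- The edge `f` of `C` lies on a simple path from `a` to `b` (in a tree, THE simple path). -/
def passesThrough {W : Type*} (C : SimpleGraph W) (f : Sym2 W) (a b : W) : Prop :=
  ∃ p : C.Walk a b, p.IsPath ∧ f ∈ p.edges

/-- `R(f)`: the set of edges of the weighted graph that pass through the edge `f` of `C`. -/
def REdges {V W : Type*} (w : V → V → ℝ) (C : SimpleGraph W) (φ : V → W) (f : Sym2 W) :
    Set (Sym2 V) :=
  {e | ∃ u v : V, e = s(u, v) ∧ w u v ≠ 0 ∧ passesThrough C f (φ u) (φ v)}

/-- The width `b(f)` of an edge `f` of `C`: total weight of the edges of `G` through `f`. -/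
noncomputable def bWidth {V W : Type*} [Fintype V] (w : V → V → ℝ) (C : SimpleGraph W)
    (φ : V → W) (f : Sym2 W) : ℝ :=
  ∑ e ∈ (REdges w C φ f).toFinset, sym2w w e

/-- The adjacency weight `a(e,g)`: total weight of edges of `G` through both `e` and `g`. -/
noncomputable def adjW {V W : Type*} [Fintype V] (w : V → V → ℝ) (C : SimpleGraph W)
    (φ : V → W) (e g : Sym2 W) : ℝ :=
  ∑ e' ∈ (REdges w C φ e ∩ REdges w C φ g).toFinset, sym2w w e'

/-- The slope `s(e,g) = w(R(g) \ R(e)) - w(R(g) ∩ R(e))`. -/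
noncomputable def slopeW {V W : Type*} [Fintype V] (w : V → V → ℝ) (C : SimpleGraph W)
    (φ : V → W) (e g : Sym2 W) : ℝ :=
  (∑ e' ∈ (REdges w C φ g \ REdges w C φ e).toFinset, sym2w w e') - adjW w C φ e g

/-- `C(f;g)`: vertex set of the subtree obtained by cutting `f` that contains the edge `g`. -/
def sideWith {W : Type*} (C : SimpleGraph W) (f g : Sym2 W) : Set W :=
  {z | ∃ a, a ∈ g ∧ (C.deleteEdges {f}).Reachable a z}

/-- `C(f;ḡ)`: vertex set of the subtree obtained by cutting `f` that does not contain `g`. -/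
def sideOpp {W : Type*} (C : SimpleGraph W) (f g : Sym2 W) : Set W := (sideWith C f g)ᶜ

/-! ### TILO orderings of a weighted graph -/

/-- `A_t`: the initial segment of an ordering. -/
def ordSet {V : Type*} (o : V → ℕ) (t : ℕ) : Set V := {v | o v ≤ t}

/-- The width `b_t` of an ordering. -/
noncomputable def ordWidth {V : Type*} [Fintype V] (w : V → V → ℝ) (o : V → ℕ) (t : ℕ) : ℝ :=
  setW w (ordSet o t) (ordSet o t)ᶜ

/-- The slope `s_{t,k}` of an ordering, with `vk` the vertex at position `k`. -/
noncomputable def ordSlope {V : Type*} [Fintype V] (w : V → V → ℝ) (o : V → ℕ) (t : ℕ)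
    (vk : V) : ℝ :=
  setW w {vk} ((ordSet o t)ᶜ \ {vk}) - setW w {vk} (ordSet o t \ {vk})

/-- The shift from position `a` to position `b`: compose the ordering with the cyclic
permutation of the block of positions between `a` and `b` sending `a` to `b`. -/
def shiftFun {V : Type*} (a b : ℕ) (o : V → ℕ) : V → ℕ := fun v =>
  if o v = a then b
  else if a < o v ∧ o v ≤ b then o v - 1
  else if b ≤ o v ∧ o v < a then o v + 1
  else o v

/-- The multiset of widths of an ordering, sorted in nonincreasing order. -/
noncomputable def ordWidthList {V : Type*} [Fintype V] (w : V → V → ℝ) (N : ℕ)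
    (o : V → ℕ) : List ℝ :=
  ((List.range N).map (ordWidth w o)).insertionSort (· ≥ ·)

/-- Strict lexicographic comparison of sorted width lists. -/
def lexLess (l₁ l₂ : List ℝ) : Prop := List.Lex (· < ·) l₁ l₂

/-- A TILO ordering is weakly reducible when some shift strictly decreases its width. -/
def OrdWeaklyReducible {V : Type*} [Fintype V] (w : V → V → ℝ) (N : ℕ) (o : V → ℕ) : Prop :=
  ∃ a b : ℕ, a < N ∧ b < N ∧ a ≠ b ∧
    lexLess (ordWidthList w N (shiftFun a b o)) (ordWidthList w N o)

/-! ### Branch shift data -/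

/-- The data of a pair of nonadjacent edges `x`, `y` of a tree `C` together with the unique
simple path `p 1, …, p i` from `x` to `y`, the extremal third edges `p 0` (at the common
endpoint of `x` and `p 1`, other endpoint `fv`) and `p (i+1)` (at the common endpoint of `y`
and `p i`, other endpoint `gv`), and the third edges `fE t` at the common endpoint of
`p (t-1)` and `p t` for `2 ≤ t ≤ i`.  The path visits the vertices
`x0, vs 0, vs 1, …, vs i, y1` where `x = s(x0, vs 0)` and `y = s(vs i, y1)`. -/
structure BranchData {W : Type*} (C : SimpleGraph W) (x y : Sym2 W) where
  i : ℕ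
  hi1 : 1 ≤ i
  vs : ℕ → W
  x0 : W
  y1 : W
  fv : W
  gv : W
  p : ℕ → Sym2 W
  fE : ℕ → Sym2 W
  hx : x ∈ C.edgeSet
  hy : y ∈ C.edgeSet
  hnonadj : ∀ z : W, ¬(z ∈ x ∧ z ∈ y)
  hxe : x = s(x0, vs 0)
  hye : y = s(vs i, y1)
  hpe : ∀ t, 1 ≤ t → t ≤ i → p t = s(vs (t - 1), vs t)
  hpedge : ∀ t, 1 ≤ t → t ≤ i → p t ∈ C.edgeSet
  hvsinj : ∀ t t', t ≤ i → t' ≤ i → vs t = vs t' → t = t'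
  hx0 : ∀ t, t ≤ i → x0 ≠ vs t
  hy1 : ∀ t, t ≤ i → y1 ≠ vs t
  hp0 : p 0 = s(vs 0, fv)
  hp0edge : p 0 ∈ C.edgeSet
  hp0x : p 0 ≠ x
  hp0p1 : p 0 ≠ p 1
  hpi1 : p (i + 1) = s(vs i, gv)
  hpi1edge : p (i + 1) ∈ C.edgeSet
  hpi1y : p (i + 1) ≠ y
  hpi1pi : p (i + 1) ≠ p i
  hfE : ∀ t, 2 ≤ t → t ≤ i →
    fE t ∈ C.edgeSet ∧ vs (t - 1) ∈ fE t ∧ fE t ≠ p (t - 1) ∧ fE t ≠ p t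

/-- The parts `P 0, …, P (i+2)` of the partition of the vertices of `G` induced by the
branch shift data. -/
def BranchData.part {V W : Type*} {C : SimpleGraph W} {x y : Sym2 W}
    (d : BranchData C x y) (φ : V → W) : ℕ → Set V := fun t =>
  if t = 0 then φ ⁻¹' (sideOpp C (d.p 0) y)
  else if t = 1 then φ ⁻¹' (sideOpp C x y)
  else if t ≤ d.i then φ ⁻¹' (sideOpp C (d.fE t) y)
  else if t = d.i + 1 then φ ⁻¹' (sideOpp C y x)
  else φ ⁻¹' (sideOpp C (d.p (d.i + 1)) y)

/-- The tree `C'` obtained by the branch shift of `x` to `y`: detach `e = p 1` from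
`v = vs 1` and reattach it at `s = vs i`, reattach the third edge `p 0` at `u = vs 0` to
`v = vs 1`, and reattach the third edge `p (i+1)` at `s = vs i` to `u = vs 0`. -/
def BranchData.shifted {W : Type*} {C : SimpleGraph W} {x y : Sym2 W}
    (d : BranchData C x y) : SimpleGraph W :=
  SimpleGraph.fromEdgeSet
    ((C.edgeSet \ {d.p 1, d.p 0, d.p (d.i + 1)}) ∪
      {s(d.vs 0, d.vs d.i), s(d.vs 1, d.fv), s(d.vs 0, d.gv)})

/-- The weight function of the branch shift quotient graph `Q`: vertex `u_j` corresponds to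
the part `P j`, and the weight of the edge `(u_j, u_l)` is `w(P j, P l)`. -/
noncomputable def BranchData.qw {V W : Type*} [Fintype V] {C : SimpleGraph W} {x y : Sym2 W}
    (d : BranchData C x y) (w : V → V → ℝ) (φ : V → W) :
    Fin (d.i + 3) → Fin (d.i + 3) → ℝ :=
  fun j l => if j = l then 0 else setW w (d.part φ j) (d.part φ l)

/-- The multiset of widths of the edges of a tree position, sorted in nonincreasing order. -/
noncomputable def treeWidthList {V W : Type*} [Fintype V] [Fintype W] (w : V → V → ℝ)
    (C : SimpleGraph W) (φ : V → W) : List ℝ :=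
  ((C.edgeSet.toFinset.val.map (bWidth w C φ)).toList).insertionSort (· ≥ ·)

/-- A tree position is weakly reducible when some branch shift strictly decreases its
width; otherwise it is strongly irreducible (thin). -/
def TPWeaklyReducible {V W : Type*} [Fintype V] [Fintype W] (w : V → V → ℝ)
    (C : SimpleGraph W) (φ : V → W) : Prop :=
  ∃ (x y : Sym2 W) (d : BranchData C x y),
    lexLess (treeWidthList w d.shifted φ) (treeWidthList w C φ)

/-! ### Pinch clusters -/

/-- The boundary weight of a set of vertices. -/
noncomputable def boundaryW {V : Type*} [Fintype V] (w : V → V → ℝ) (A : Set V) : ℝ :=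
  setW w A Aᶜ

/-- `A` is a pinch cluster: whenever adding the vertices `v 1, …, v m` to `A` (resp. removing
them from `A`) produces a set with strictly smaller boundary, some proper initial segment
`v 1, …, v k` added (resp. removed) produces a set with strictly larger boundary. -/
def IsPinchCluster {V : Type*} [Fintype V] (w : V → V → ℝ) (A : Set V) : Prop :=
  ∀ (m : ℕ) (v : ℕ → V),
    (boundaryW w (A ∪ v '' Set.Icc 1 m) < boundaryW w A →
      ∃ k, 1 ≤ k ∧ k < m ∧ boundaryW w A < boundaryW w (A ∪ v '' Set.Icc 1 k)) ∧
    (boundaryW w (A \ v '' Set.Icc 1 m) < boundaryW w A →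
      ∃ k, 1 ≤ k ∧ k < m ∧ boundaryW w A < boundaryW w (A \ v '' Set.Icc 1 k))

/-- `e` is a local minimum of the tree position: each endpoint of `e` is shared with an edge
of strictly greater width whose second endpoint is not a boundary vertex. -/
def IsLocalMinEdge {V W : Type*} [Fintype V] (w : V → V → ℝ) (C : SimpleGraph W)
    (φ : V → W) (e : Sym2 W) : Prop :=
  ∀ z ∈ e, ∃ f ∈ C.edgeSet, z ∈ f ∧ f ≠ e ∧
    bWidth w C φ e < bWidth w C φ f ∧ ∀ z' ∈ f, z' ≠ z → ¬ IsLeaf C z'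


/-! ### Auxiliary generic lemmas -/

section BSAux
variable {W : Type*}

lemma bs_reach_mono {G H : SimpleGraph W} (h : ∀ a b, G.Adj a b → H.Reachable a b)
    {a b : W} (hr : G.Reachable a b) : H.Reachable a b := by
  obtain ⟨p⟩ := hr
  induction p with
  | nil => exact SimpleGraph.Reachable.refl _
  | cons hadj _ ih => exact (h _ _ hadj).trans ih

lemma bs_chain_reach (H : SimpleGraph W) (vs : ℕ → W) (a : ℕ) :
    ∀ b, a ≤ b → (∀ t, a < t → t ≤ b → H.Adj (vs (t-1)) (vs t)) →
    H.Reachable (vs a) (vs b) := by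
  intro b
  induction b with
  | zero => intro hab _; rw [Nat.le_zero.mp hab]
  | succ m ih =>
    intro hab hadj
    rcases Nat.lt_or_ge a (m+1) with h | h
    · have ham : a ≤ m := Nat.lt_succ_iff.mp h
      refine (ih ham fun t ht ht' => hadj t ht (ht'.trans (Nat.le_succ m))).trans ?_
      have := hadj (m+1) h le_rfl
      simpa using this.reachable
    · rw [Nat.le_antisymm hab h]

lemma bs_bridge_sep {G : SimpleGraph W} (hG : G.IsAcyclic) {a b : W} (h : G.Adj a b) :
    ¬ (G.deleteEdges {s(a,b)}).Reachable a b := by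
  have := (SimpleGraph.isAcyclic_iff_forall_adj_isBridge.mp hG) h
  exact this

lemma bs_reach_of_sym2_eq {H : SimpleGraph W} {a b c d : W} (h : s(a,b) = s(c,d))
    (hr : H.Reachable a b) : H.Reachable c d := by
  rw [Sym2.eq_iff] at h
  rcases h with ⟨rfl, rfl⟩ | ⟨rfl, rfl⟩
  · exact hr
  · exact hr.symm

lemma bs_nbhd_pin {G : SimpleGraph W} [Fintype W] {v a b c : W}
    (hcard : (G.neighborSet v).ncard = 1 ∨ (G.neighborSet v).ncard = 3)
    (ha : G.Adj v a) (hb : G.Adj v b) (hc : G.Adj v c)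
    (hab : a ≠ b) (hac : a ≠ c) (hbc : b ≠ c) :
    ∀ z, G.Adj v z ↔ z = a ∨ z = b ∨ z = c := by
  have hsub : ({a, b, c} : Set W) ⊆ G.neighborSet v := by
    intro z hz
    rcases hz with rfl | rfl | rfl <;> assumption
  have h3 : ({a, b, c} : Set W).ncard = 3 := by
    rw [Set.ncard_insert_of_notMem (by simp [hab, hac]) (Set.toFinite _),
        Set.ncard_insert_of_notMem (by simp [hbc]) (Set.toFinite _),
        Set.ncard_singleton]
  have hle : 3 ≤ (G.neighborSet v).ncard := h3 ▸ Set.ncard_le_ncard hsub (Set.toFinite _)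
  have heq : ({a, b, c} : Set W) = G.neighborSet v :=
    Set.eq_of_subset_of_ncard_le hsub (by omega) (Set.toFinite _)
  intro z
  constructor
  · intro hz
    have : z ∈ ({a,b,c} : Set W) := heq ▸ (by exact hz : z ∈ G.neighborSet v)
    simpa using this
  · rintro (rfl | rfl | rfl) <;> assumption

lemma bs_sideWith_transfer {G G' : SimpleGraph W} {f f' g g' : Sym2 W}
    (hrel : ∀ a b, (G'.deleteEdges {f'}).Reachable a b ↔ (G.deleteEdges {f}).Reachable a b)
    (hcon : ∀ a ∈ g', ∀ b ∈ g, (G.deleteEdges {f}).Reachable a b) :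
    sideWith G' f' g' = sideWith G f g := by
  ext z
  constructor
  · rintro ⟨a, ha, r⟩
    exact ⟨g.out.1, g.out_fst_mem, (hcon a ha _ g.out_fst_mem).symm.trans ((hrel a z).mp r)⟩
  · rintro ⟨b, hb, r⟩
    exact ⟨g'.out.1, g'.out_fst_mem, (hrel _ z).mpr ((hcon _ g'.out_fst_mem b hb).trans r)⟩

lemma bs_sideOpp_transfer {G G' : SimpleGraph W} {f f' g g' : Sym2 W}
    (hrel : ∀ a b, (G'.deleteEdges {f'}).Reachable a b ↔ (G.deleteEdges {f}).Reachable a b)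
    (hcon : ∀ a ∈ g', ∀ b ∈ g, (G.deleteEdges {f}).Reachable a b) :
    sideOpp G' f' g' = sideOpp G f g := by
  unfold sideOpp
  rw [bs_sideWith_transfer hrel hcon]

end BSAux

set_option maxHeartbeats 1600000 in
/-- With `(C',φ)` the branch shift of `x` to `y` applied to `(C,φ)` and
`Q' = Q` the common branch shift quotient graph, the identity-map TILO ordering on `Q`
defined by `(C',φ)` is the result of cyclically shifting the vertex at position `1` of the
identity-map TILO ordering defined by `(C,φ)` to position `i+1`: the ordering
`(u_0, u_1, …, u_{i+2})` is replaced by `(u_0, u_2, u_3, …, u_i, u_{i+1}, u_1, u_{i+2})`,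
i.e. the part at position `j` of the new ordering is the part at position `σ j` of the old
one, where `σ (i+1) = 1`, `σ j = j + 1` for `1 ≤ j ≤ i`, and `σ j = j` otherwise. -/
theorem branch_shift_ordering {V W : Type*} [Fintype V] [Fintype W]
    (w : V → V → ℝ) (hsymm : ∀ u v, w u v = w v u) (hnn : ∀ u v, 0 ≤ w u v)
    (hdiag : ∀ v, w v v = 0)
    (C : SimpleGraph W) (φ : V → W) (htp : IsTreePosition C φ)
    (x y : Sym2 W) (d : BranchData C x y) (hi2 : 2 ≤ d.i) :
    ∀ d' : BranchData d.shifted (d.fE 2) x,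
      ∀ j, j ≤ d.i + 2 →
        d'.part φ j =
          d.part φ (if j = d.i + 1 then 1 else if 1 ≤ j ∧ j ≤ d.i then j + 1 else j) := by
  intro d' j hj
  obtain ⟨m, hm1, vs', X0, Y1, FV, GV, P', FE', hxE', hyE', hnadj', hxe', hye', hpe', hpedge',
    hvsinj', hX0v, hY1v, hP0, hP0edge, hP0x, hP0p1, hPi1, hPi1edge, hPi1y, hPi1pi, hfE'⟩ := d'
  obtain ⟨n, hn1, vs, x0, y1, fv, gv, p, fE, hxE, hyE, hnadj, hxe, hye, hpe, hpedge,
    hvsinj, hx0v, hy1v, hp0, hp0edge, hp0x, hp0p1, hpi1, hpi1edge, hpi1y, hpi1pi, hfE⟩ := d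
  simp only at hi2 hj ⊢
  set C' : SimpleGraph W := BranchData.shifted
    ⟨n, hn1, vs, x0, y1, fv, gv, p, fE, hxE, hyE, hnadj, hxe, hye, hpe, hpedge,
     hvsinj, hx0v, hy1v, hp0, hp0edge, hp0x, hp0p1, hpi1, hpi1edge, hpi1y, hpi1pi, hfE⟩
    with hC'
  simp only [BranchData.shifted] at hC'
  simp only at hxE' hxe' hP0x
  have hacy : C.IsAcyclic := htp.1.1.2
  have hdeg : ∀ z : W, (C.neighborSet z).ncard = 1 ∨ (C.neighborSet z).ncard = 3 := htp.1.2
  -- basic adjacencies in C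
  have hadjx : C.Adj x0 (vs 0) := C.mem_edgeSet.mp (hxe ▸ hxE)
  have hadjy : C.Adj (vs n) y1 := C.mem_edgeSet.mp (hye ▸ hyE)
  have hadjp : ∀ t, 1 ≤ t → t ≤ n → C.Adj (vs (t-1)) (vs t) := by
    intro t h1 h2
    exact C.mem_edgeSet.mp (by rw [← hpe t h1 h2]; exact hpedge t h1 h2)
  have hadjp0 : C.Adj (vs 0) fv := C.mem_edgeSet.mp (hp0 ▸ hp0edge)
  have hadjpi : C.Adj (vs n) gv := C.mem_edgeSet.mp (hpi1 ▸ hpi1edge)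
  have hsep : ∀ a b : W, C.Adj a b → ¬ (C.deleteEdges {s(a,b)}).Reachable a b :=
    fun a b h => bs_bridge_sep hacy h
  -- the third edges along the path
  have hwex : ∀ t, ∃ z, 2 ≤ t → t ≤ n → fE t = s(vs (t-1), z) ∧ C.Adj (vs (t-1)) z := by
    intro t
    by_cases h : 2 ≤ t ∧ t ≤ n
    · obtain ⟨hedge, hmem, _, _⟩ := hfE t h.1 h.2
      refine ⟨Sym2.Mem.other hmem, fun _ _ => ⟨(Sym2.other_spec hmem).symm, ?_⟩⟩
      exact C.mem_edgeSet.mp (by rw [Sym2.other_spec hmem]; exact hedge)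
    · exact ⟨vs 0, fun h1 h2 => absurd ⟨h1, h2⟩ h⟩
  choose wE hwE using hwex
  have hwspec : ∀ t, 2 ≤ t → t ≤ n → fE t = s(vs (t-1), wE t) := fun t h1 h2 => (hwE t h1 h2).1
  have hadjw : ∀ t, 2 ≤ t → t ≤ n → C.Adj (vs (t-1)) (wE t) := fun t h1 h2 => (hwE t h1 h2).2
  -- chains in C minus an edge
  have hchainC : ∀ (e : Sym2 W) (a b : ℕ), a ≤ b → b ≤ n →
      (∀ r, a < r → r ≤ b → p r ≠ e) → (C.deleteEdges {e}).Reachable (vs a) (vs b) := by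
    intro e a b hab hbn hne
    refine bs_chain_reach _ _ _ _ hab ?_
    intro t ht ht'
    have h1 : 1 ≤ t := by omega
    have h2 : t ≤ n := by omega
    rw [SimpleGraph.deleteEdges_adj]
    refine ⟨hadjp t h1 h2, ?_⟩
    simp only [Set.mem_singleton_iff]
    rw [← hpe t h1 h2]
    exact hne t ht ht'
  have hvne : ∀ t t', t ≤ n → t' ≤ n → t ≠ t' → vs t ≠ vs t' :=
    fun t t' h h' hne heq => hne (hvsinj _ _ h h' heq)
  -- p r never equals an edge with an endpoint outside the path
  have hp_ne_u : ∀ (r a : ℕ) (u : W), 1 ≤ r → r ≤ n → (∀ s, s ≤ n → u ≠ vs s) →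
      p r ≠ s(vs a, u) := by
    intro r a u h1 h2 hu heq
    rw [hpe r h1 h2] at heq
    rcases Sym2.eq_iff.mp heq with ⟨_, h4⟩ | ⟨h3, _⟩
    · exact hu r h2 h4.symm
    · exact hu (r-1) (by omega) h3.symm
  -- vertices far apart on the path are not adjacent
  have hnoadj_far : ∀ a b, a ≤ n → b ≤ n → a + 2 ≤ b → ¬ C.Adj (vs a) (vs b) := by
    intro a b ha hb hab hadj
    apply hsep (vs a) (vs b) hadj
    refine hchainC (s(vs a, vs b)) a b (by omega) hb ?_
    intro r h1 h2 heq
    rw [hpe r (by omega) (by omega)] at heq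
    rcases Sym2.eq_iff.mp heq with ⟨h3, h4⟩ | ⟨h3, h4⟩
    · have e1 := hvsinj _ _ (by omega) ha h3
      have e2 := hvsinj _ _ (by omega) hb h4
      omega
    · have e1 := hvsinj _ _ (by omega) hb h3
      omega
  have hadj_near : ∀ a b, a ≤ n → b ≤ n → C.Adj (vs a) (vs b) → (b = a+1 ∨ a = b+1) := by
    intro a b ha hb hadj
    have hne : a ≠ b := fun h => C.ne_of_adj hadj (by rw [h])
    rcases Nat.lt_or_ge (a+1) b with h | h
    · exact absurd hadj (hnoadj_far a b ha hb (by omega))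
    · rcases Nat.lt_or_ge (b+1) a with h' | h'
      · exact absurd hadj.symm (hnoadj_far b a hb ha (by omega))
      · omega
  have hp1e : p 1 = s(vs 0, vs 1) := by
    have := hpe 1 le_rfl (by omega); simpa using this
  have hfv : ∀ t, t ≤ n → fv ≠ vs t := by
    intro t ht heq
    have hadj : C.Adj (vs 0) (vs t) := heq ▸ hadjp0
    rcases hadj_near 0 t (by omega) ht hadj with h | h
    · apply hp0p1
      rw [hp0, hp1e, heq, h]
    · omega
  have hgvv : ∀ t, t ≤ n → gv ≠ vs t := by
    intro t ht heq
    have hadj : C.Adj (vs n) (vs t) := heq ▸ hadjpi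
    rcases hadj_near n t (by omega) ht hadj with h | h
    · omega
    · apply hpi1pi
      rw [hpi1, hpe n (by omega) le_rfl, heq, h]
      exact Sym2.eq_swap
  have hwv : ∀ t r, 2 ≤ t → t ≤ n → r ≤ n → wE t ≠ vs r := by
    intro t r h2 hn' hr heq
    have hadj : C.Adj (vs (t-1)) (vs r) := heq ▸ hadjw t h2 hn'
    rcases hadj_near (t-1) r (by omega) hr hadj with h | h
    · -- r = t
      apply (hfE t h2 hn').2.2.2
      have hrt : r = t := by omega
      rw [hwspec t h2 hn', heq, hrt, hpe t (by omega) hn']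
    · -- t-1 = r+1, i.e. r = t-2
      apply (hfE t h2 hn').2.2.1
      rw [hwspec t h2 hn', heq, hpe (t-1) (by omega) (by omega)]
      rw [show t-1-1 = r from by omega]
      exact Sym2.eq_swap
  have hw2fv : wE 2 ≠ fv := by
    intro heq
    have hadj : C.Adj (vs 1) fv := by
      have := hadjw 2 le_rfl hi2; rw [heq] at this; simpa using this
    apply hsep (vs 1) fv hadj
    have s1 : (C.deleteEdges {s(vs 1, fv)}).Adj (vs 0) (vs 1) := by
      rw [SimpleGraph.deleteEdges_adj]
      refine ⟨by simpa using hadjp 1 le_rfl (by omega), ?_⟩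
      simp only [Set.mem_singleton_iff, Sym2.eq_iff]
      push_neg
      constructor
      · intro h; exact absurd h (hvne 0 1 (by omega) (by omega) (by omega))
      · intro h; exact absurd h.symm (hfv 0 (by omega))
    have s2 : (C.deleteEdges {s(vs 1, fv)}).Adj (vs 0) fv := by
      rw [SimpleGraph.deleteEdges_adj]
      refine ⟨hadjp0, ?_⟩
      simp only [Set.mem_singleton_iff, Sym2.eq_iff]
      push_neg
      constructor
      · intro h; exact absurd h (hvne 0 1 (by omega) (by omega) (by omega))
      · intro h; exact absurd h.symm (hfv 0 (by omega))
    exact s1.symm.reachable.trans s2.reachable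
  have hfvx0 : fv ≠ x0 := by
    intro heq
    apply hp0x
    rw [hp0, heq, hxe]
    exact Sym2.eq_swap
  have hgvy1 : gv ≠ y1 := by
    intro heq
    apply hpi1y
    rw [hpi1, heq, hye]
  have hgvx0 : gv ≠ x0 := by
    intro heq
    have hadj : C.Adj (vs n) x0 := heq ▸ hadjpi
    apply hsep (vs n) x0 hadj
    have hch : (C.deleteEdges {s(vs n, x0)}).Reachable (vs 0) (vs n) := by
      refine hchainC _ 0 n (by omega) le_rfl ?_
      intro r h1 h2 heq'
      rw [hpe r h1 h2] at heq'
      rcases Sym2.eq_iff.mp heq' with ⟨_, h4⟩ | ⟨h3, _⟩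
      · exact hx0v r h2 h4.symm
      · exact hx0v (r-1) (by omega) h3.symm
    have hx' : (C.deleteEdges {s(vs n, x0)}).Adj x0 (vs 0) := by
      rw [SimpleGraph.deleteEdges_adj]
      refine ⟨hadjx, ?_⟩
      simp only [Set.mem_singleton_iff, Sym2.eq_iff]
      rintro (⟨h1, _⟩ | ⟨_, h2⟩)
      · exact hx0v n le_rfl h1
      · exact hvne 0 n (by omega) le_rfl (by omega) h2
    exact hch.symm.trans hx'.symm.reachable
  -- Sym2-inequality battery
  have hpx : ∀ r, 1 ≤ r → r ≤ n → p r ≠ x := by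
    intro r h1 h2 heq
    exact hp_ne_u r 0 x0 h1 h2 hx0v ((hxe ▸ heq).trans Sym2.eq_swap)
  have hpy : ∀ r, 1 ≤ r → r ≤ n → p r ≠ y := by
    intro r h1 h2 heq
    exact hp_ne_u r n y1 h1 h2 hy1v (hye ▸ heq)
  have hpp0 : ∀ r, 1 ≤ r → r ≤ n → p r ≠ p 0 := by
    intro r h1 h2 heq
    exact hp_ne_u r 0 fv h1 h2 hfv (hp0 ▸ heq)
  have hppi1 : ∀ r, 1 ≤ r → r ≤ n → p r ≠ p (n+1) := by
    intro r h1 h2 heq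
    exact hp_ne_u r n gv h1 h2 hgvv (hpi1 ▸ heq)
  have hpfE : ∀ r t, 1 ≤ r → r ≤ n → 2 ≤ t → t ≤ n → p r ≠ fE t := by
    intro r t h1 h2 h3 h4 heq
    exact hp_ne_u r (t-1) (wE t) h1 h2 (fun s hs => hwv t s h3 h4 hs) (hwspec t h3 h4 ▸ heq)
  have hpE1 : ∀ r, 1 ≤ r → r ≤ n → p r ≠ s(vs 0, vs n) := by
    intro r h1 h2 heq
    rw [hpe r h1 h2] at heq
    rcases Sym2.eq_iff.mp heq with ⟨h3, h4⟩ | ⟨h3, h4⟩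
    · have e1 := hvsinj _ _ (by omega) (by omega) h3
      have e2 := hvsinj _ _ h2 le_rfl h4
      omega
    · have e1 := hvsinj _ _ (by omega) le_rfl h3
      omega
  have hpE2 : ∀ r, 1 ≤ r → r ≤ n → p r ≠ s(vs 1, fv) := by
    intro r h1 h2 heq
    exact hp_ne_u r 1 fv h1 h2 hfv heq
  have hpE3 : ∀ r, 1 ≤ r → r ≤ n → p r ≠ s(vs 0, gv) := by
    intro r h1 h2 heq
    exact hp_ne_u r 0 gv h1 h2 hgvv heq
  have hpp1 : ∀ r, 2 ≤ r → r ≤ n → p r ≠ p 1 := by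
    intro r h1 h2 heq
    rw [hpe r (by omega) h2, hp1e] at heq
    rcases Sym2.eq_iff.mp heq with ⟨h3, h4⟩ | ⟨h3, h4⟩
    · have e1 := hvsinj _ _ (by omega) (by omega) h3
      omega
    · have e1 := hvsinj _ _ (by omega) (by omega) h3
      have e2 := hvsinj _ _ h2 (by omega) h4
      omega
  have hxy : x ≠ y := by
    intro h
    exact hnadj x0 ⟨by rw [hxe]; exact Sym2.mem_mk_left _ _,
      by rw [← h, hxe]; exact Sym2.mem_mk_left _ _⟩
  have hxpi1 : x ≠ p (n+1) := by
    rw [hxe, hpi1]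
    intro h
    rcases Sym2.eq_iff.mp h with ⟨h1, h2⟩ | ⟨h1, h2⟩
    · exact hx0v n le_rfl h1
    · exact hgvx0 h1.symm
  have hxE1 : x ≠ s(vs 0, vs n) := by
    rw [hxe]
    intro h
    rcases Sym2.eq_iff.mp h with ⟨h1, h2⟩ | ⟨h1, h2⟩
    · exact hx0v 0 (by omega) h1
    · exact hx0v n le_rfl h1
  have hxE2 : x ≠ s(vs 1, fv) := by
    rw [hxe]
    intro h
    rcases Sym2.eq_iff.mp h with ⟨h1, h2⟩ | ⟨h1, h2⟩
    · exact hx0v 1 (by omega) h1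
    · exact hvne 0 1 (by omega) (by omega) (by omega) h2
  have hxE3 : x ≠ s(vs 0, gv) := by
    rw [hxe]
    intro h
    rcases Sym2.eq_iff.mp h with ⟨h1, h2⟩ | ⟨h1, h2⟩
    · exact hx0v 0 (by omega) h1
    · exact hgvx0 h1.symm
  have hxfE : ∀ t, 2 ≤ t → t ≤ n → x ≠ fE t := by
    intro t h1 h2 h
    rw [hxe, hwspec t h1 h2] at h
    rcases Sym2.eq_iff.mp h with ⟨h3, h4⟩ | ⟨h3, h4⟩
    · exact hx0v (t-1) (by omega) h3
    · exact hvne 0 (t-1) (by omega) (by omega) (by omega) h4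
  have hyp0 : y ≠ p 0 := by
    rw [hye, hp0]
    intro h
    rcases Sym2.eq_iff.mp h with ⟨h1, h2⟩ | ⟨h1, h2⟩
    · exact hvne n 0 le_rfl (by omega) (by omega) h1
    · exact hfv n le_rfl h1.symm
  have hyE1 : y ≠ s(vs 0, vs n) := by
    rw [hye]
    intro h
    rcases Sym2.eq_iff.mp h with ⟨h1, h2⟩ | ⟨h1, h2⟩
    · exact hvne n 0 le_rfl (by omega) (by omega) h1
    · exact hy1v 0 (by omega) h2
  have hyE2 : y ≠ s(vs 1, fv) := by
    rw [hye]
    intro h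
    rcases Sym2.eq_iff.mp h with ⟨h1, h2⟩ | ⟨h1, h2⟩
    · exact hvne n 1 le_rfl (by omega) (by omega) h1
    · exact hfv n le_rfl h1.symm
  have hyE3 : y ≠ s(vs 0, gv) := by
    rw [hye]
    intro h
    rcases Sym2.eq_iff.mp h with ⟨h1, h2⟩ | ⟨h1, h2⟩
    · exact hvne n 0 le_rfl (by omega) (by omega) h1
    · exact hgvv n le_rfl h1.symm
  have hyfE : ∀ t, 2 ≤ t → t ≤ n → y ≠ fE t := by
    intro t h1 h2 h
    rw [hye, hwspec t h1 h2] at h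
    rcases Sym2.eq_iff.mp h with ⟨h3, h4⟩ | ⟨h3, h4⟩
    · exact hvne n (t-1) le_rfl (by omega) (by omega) h3
    · exact hwv t n h1 h2 le_rfl h3.symm
  have hfEp0 : ∀ t, 2 ≤ t → t ≤ n → fE t ≠ p 0 := by
    intro t h1 h2 h
    rw [hwspec t h1 h2, hp0] at h
    rcases Sym2.eq_iff.mp h with ⟨h3, h4⟩ | ⟨h3, h4⟩
    · exact hvne (t-1) 0 (by omega) (by omega) (by omega) h3
    · exact hfv (t-1) (by omega) h3.symm
  have hfEpi1 : ∀ t, 2 ≤ t → t ≤ n → fE t ≠ p (n+1) := by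
    intro t h1 h2 h
    rw [hwspec t h1 h2, hpi1] at h
    rcases Sym2.eq_iff.mp h with ⟨h3, h4⟩ | ⟨h3, h4⟩
    · exact hvne (t-1) n (by omega) le_rfl (by omega) h3
    · exact hgvv (t-1) (by omega) h3.symm
  have hfEE1 : ∀ t, 2 ≤ t → t ≤ n → fE t ≠ s(vs 0, vs n) := by
    intro t h1 h2 h
    rw [hwspec t h1 h2] at h
    rcases Sym2.eq_iff.mp h with ⟨h3, h4⟩ | ⟨h3, h4⟩
    · exact hwv t n h1 h2 le_rfl h4
    · exact hwv t 0 h1 h2 (by omega) h4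
  have hfEE2 : ∀ t, 2 ≤ t → t ≤ n → fE t ≠ s(vs 1, fv) := by
    intro t h1 h2 h
    rw [hwspec t h1 h2] at h
    rcases Sym2.eq_iff.mp h with ⟨h3, h4⟩ | ⟨h3, h4⟩
    · have : t = 2 := by
        have := hvsinj (t-1) 1 (by omega) (by omega) h3
        omega
      subst this
      exact hw2fv h4
    · exact hfv (t-1) (by omega) h3.symm
  have hfEE3 : ∀ t, 2 ≤ t → t ≤ n → fE t ≠ s(vs 0, gv) := by
    intro t h1 h2 h
    rw [hwspec t h1 h2] at h
    rcases Sym2.eq_iff.mp h with ⟨h3, h4⟩ | ⟨h3, h4⟩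
    · exact hvne (t-1) 0 (by omega) (by omega) (by omega) h3
    · exact hgvv (t-1) (by omega) h3.symm
  have hE1E2 : s(vs 0, vs n) ≠ s(vs 1, fv) := by
    intro h
    rcases Sym2.eq_iff.mp h with ⟨h1, h2⟩ | ⟨h1, h2⟩
    · exact hvne 0 1 (by omega) (by omega) (by omega) h1
    · exact hfv 0 (by omega) h1.symm
  have hE1E3 : s(vs 0, vs n) ≠ s(vs 0, gv) := by
    intro h
    rcases Sym2.eq_iff.mp h with ⟨h1, h2⟩ | ⟨h1, h2⟩
    · exact hgvv n le_rfl h2.symm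
    · exact hgvv 0 (by omega) h1.symm
  have hE2E3 : s(vs 1, fv) ≠ s(vs 0, gv) := by
    intro h
    rcases Sym2.eq_iff.mp h with ⟨h1, h2⟩ | ⟨h1, h2⟩
    · exact hvne 1 0 (by omega) (by omega) (by omega) h1
    · exact hgvv 1 (by omega) h1.symm
  have hE1C : s(vs 0, vs n) ∉ C.edgeSet := by
    intro h
    exact hnoadj_far 0 n (by omega) le_rfl (by omega) (C.mem_edgeSet.mp h)
  have hE2C : s(vs 1, fv) ∉ C.edgeSet := by
    intro h
    have hadj := C.mem_edgeSet.mp h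
    apply hsep (vs 1) fv hadj
    have s1 : (C.deleteEdges {s(vs 1, fv)}).Adj (vs 0) (vs 1) := by
      rw [SimpleGraph.deleteEdges_adj]
      refine ⟨by simpa using hadjp 1 le_rfl (by omega), ?_⟩
      simp only [Set.mem_singleton_iff]
      rw [← hp1e]
      exact hpE2 1 le_rfl (by omega)
    have s2 : (C.deleteEdges {s(vs 1, fv)}).Adj (vs 0) fv := by
      rw [SimpleGraph.deleteEdges_adj]
      refine ⟨hadjp0, ?_⟩
      simp only [Set.mem_singleton_iff, Sym2.eq_iff]
      rintro (⟨h1, _⟩ | ⟨h1, _⟩)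
      · exact hvne 0 1 (by omega) (by omega) (by omega) h1
      · exact hfv 0 (by omega) h1.symm
    exact s1.symm.reachable.trans s2.reachable
  have hE3C : s(vs 0, gv) ∉ C.edgeSet := by
    intro h
    have hadj := C.mem_edgeSet.mp h
    apply hsep (vs 0) gv hadj
    have hch : (C.deleteEdges {s(vs 0, gv)}).Reachable (vs 0) (vs n) :=
      hchainC _ 0 n (by omega) le_rfl (fun r h1 h2 => hpE3 r h1 h2)
    have s2 : (C.deleteEdges {s(vs 0, gv)}).Adj (vs n) gv := by
      rw [SimpleGraph.deleteEdges_adj]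
      refine ⟨hadjpi, ?_⟩
      simp only [Set.mem_singleton_iff, Sym2.eq_iff]
      rintro (⟨h1, _⟩ | ⟨_, h2⟩)
      · exact hvne n 0 le_rfl (by omega) (by omega) h1
      · exact hgvv 0 (by omega) h2
    exact hch.trans s2.reachable
  -- C' adjacency infrastructure
  have hC'adj : ∀ a b : W, C'.Adj a b ↔
      ((s(a,b) ∈ C.edgeSet ∧ s(a,b) ≠ p 1 ∧ s(a,b) ≠ p 0 ∧ s(a,b) ≠ p (n+1)) ∨
        s(a,b) = s(vs 0, vs n) ∨ s(a,b) = s(vs 1, fv) ∨ s(a,b) = s(vs 0, gv)) ∧ a ≠ b := by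
    intro a b
    rw [hC', SimpleGraph.fromEdgeSet_adj]
    simp only [Set.mem_union, Set.mem_diff, Set.mem_insert_iff, Set.mem_singleton_iff]
    constructor
    · rintro ⟨hmem, hne⟩
      refine ⟨?_, hne⟩
      rcases hmem with ⟨he, hnotdel⟩ | hnew
      · exact Or.inl ⟨he, fun h => hnotdel (Or.inl h),
          fun h => hnotdel (Or.inr (Or.inl h)), fun h => hnotdel (Or.inr (Or.inr h))⟩
      · exact Or.inr hnew
    · rintro ⟨hmem, hne⟩
      refine ⟨?_, hne⟩
      rcases hmem with ⟨he, h1, h2, h3⟩ | hnew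
      · refine Or.inl ⟨he, ?_⟩
        rintro (h | h | h)
        exacts [h1 h, h2 h, h3 h]
      · exact Or.inr hnew
  have hkept : ∀ a b : W, C.Adj a b → s(a,b) ≠ p 1 → s(a,b) ≠ p 0 → s(a,b) ≠ p (n+1) →
      C'.Adj a b := by
    intro a b h h1 h2 h3
    exact (hC'adj a b).mpr ⟨Or.inl ⟨C.mem_edgeSet.mpr h, h1, h2, h3⟩, h.ne⟩
  have hadjE1' : C'.Adj (vs 0) (vs n) :=
    (hC'adj _ _).mpr ⟨Or.inr (Or.inl rfl), hvne 0 n (by omega) le_rfl (by omega)⟩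
  have hadjE2' : C'.Adj (vs 1) fv :=
    (hC'adj _ _).mpr ⟨Or.inr (Or.inr (Or.inl rfl)), fun h => hfv 1 (by omega) h.symm⟩
  have hadjE3' : C'.Adj (vs 0) gv :=
    (hC'adj _ _).mpr ⟨Or.inr (Or.inr (Or.inr rfl)), fun h => hgvv 0 (by omega) h.symm⟩
  have hadjp' : ∀ r, 2 ≤ r → r ≤ n → C'.Adj (vs (r-1)) (vs r) := by
    intro r h1 h2
    refine hkept _ _ (hadjp r (by omega) h2) ?_ ?_ ?_ <;> rw [← hpe r (by omega) h2]
    · exact hpp1 r h1 h2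
    · exact hpp0 r (by omega) h2
    · exact hppi1 r (by omega) h2
  have hadjx' : C'.Adj x0 (vs 0) := by
    refine hkept _ _ hadjx ?_ ?_ ?_ <;> rw [show s(x0, vs 0) = x from hxe.symm]
    · exact fun h => hpx 1 le_rfl (by omega) h.symm
    · exact fun h => hp0x h.symm
    · exact fun h => hxpi1 h
  have hadjy' : C'.Adj (vs n) y1 := by
    refine hkept _ _ hadjy ?_ ?_ ?_ <;> rw [show s(vs n, y1) = y from hye.symm]
    · exact fun h => hpy 1 le_rfl (by omega) h.symm
    · exact hyp0
    · exact fun h => hpi1y h.symm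
  have hadjfE' : ∀ t, 2 ≤ t → t ≤ n → C'.Adj (vs (t-1)) (wE t) := by
    intro t h1 h2
    refine hkept _ _ (hadjw t h1 h2) ?_ ?_ ?_ <;>
      rw [show s(vs (t-1), wE t) = fE t from (hwspec t h1 h2).symm]
    · exact fun h => hpfE 1 t le_rfl (by omega) h1 h2 h.symm
    · exact hfEp0 t h1 h2
    · exact hfEpi1 t h1 h2
  -- neighborhoods in C
  have hadjp1 : C.Adj (vs 0) (vs 1) := by simpa using hadjp 1 le_rfl (by omega)
  have hNC0 : ∀ z, C.Adj (vs 0) z ↔ z = x0 ∨ z = vs 1 ∨ z = fv :=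
    bs_nbhd_pin (hdeg (vs 0)) hadjx.symm hadjp1 hadjp0
      (hx0v 1 (by omega)) (Ne.symm hfvx0) (fun h => hfv 1 (by omega) h.symm)
  have hNCmid : ∀ t, 1 ≤ t → t ≤ n-1 → ∀ z,
      C.Adj (vs t) z ↔ z = vs (t-1) ∨ z = vs (t+1) ∨ z = wE (t+1) := by
    intro t h1 h2
    have e1 : C.Adj (vs t) (vs (t+1)) := by
      have := hadjp (t+1) (by omega) (by omega); simpa using this
    have e2 : C.Adj (vs t) (wE (t+1)) := by
      have := hadjw (t+1) (by omega) (by omega); simpa using this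
    exact bs_nbhd_pin (hdeg (vs t)) (hadjp t h1 (by omega)).symm e1 e2
      (hvne (t-1) (t+1) (by omega) (by omega) (by omega))
      (fun h => hwv (t+1) (t-1) (by omega) (by omega) (by omega) h.symm)
      (fun h => hwv (t+1) (t+1) (by omega) (by omega) (by omega) h.symm)
  have hNCn : ∀ z, C.Adj (vs n) z ↔ z = vs (n-1) ∨ z = y1 ∨ z = gv := by
    have e1 : C.Adj (vs (n-1)) (vs n) := by
      have := hadjp n (by omega) le_rfl; simpa using this
    exact bs_nbhd_pin (hdeg (vs n)) e1.symm hadjy hadjpi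
      (fun h => hy1v (n-1) (by omega) h.symm)
      (fun h => hgvv (n-1) (by omega) h.symm) (Ne.symm hgvy1)
  -- neighborhoods in C'
  have hN'0 : ∀ z, C'.Adj (vs 0) z ↔ z = x0 ∨ z = vs n ∨ z = gv := by
    intro z
    constructor
    · intro h
      obtain ⟨hcase, hne⟩ := (hC'adj _ _).mp h
      rcases hcase with ⟨hE, hne1, hne0, hnei⟩ | hE | hE | hE
      · rcases (hNC0 z).mp (C.mem_edgeSet.mp hE) with rfl | rfl | rfl
        · exact Or.inl rfl
        · exact absurd hp1e.symm hne1
        · exact absurd hp0.symm hne0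
      · rcases Sym2.eq_iff.mp hE with ⟨_, rfl⟩ | ⟨h1, _⟩
        · exact Or.inr (Or.inl rfl)
        · exact absurd h1 (hvne 0 n (by omega) le_rfl (by omega))
      · rcases Sym2.eq_iff.mp hE with ⟨h1, _⟩ | ⟨h1, _⟩
        · exact absurd h1 (hvne 0 1 (by omega) (by omega) (by omega))
        · exact absurd h1.symm (hfv 0 (by omega))
      · rcases Sym2.eq_iff.mp hE with ⟨_, rfl⟩ | ⟨h1, _⟩
        · exact Or.inr (Or.inr rfl)
        · exact absurd h1.symm (hgvv 0 (by omega))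
    · rintro (rfl | rfl | rfl)
      · exact hadjx'.symm
      · exact hadjE1'
      · exact hadjE3'
  have hN'1 : ∀ z, C'.Adj (vs 1) z ↔ z = vs 2 ∨ z = wE 2 ∨ z = fv := by
    intro z
    constructor
    · intro h
      obtain ⟨hcase, hne⟩ := (hC'adj _ _).mp h
      rcases hcase with ⟨hE, hne1, hne0, hnei⟩ | hE | hE | hE
      · have := (hNCmid 1 le_rfl (by omega) z).mp (C.mem_edgeSet.mp hE)
        simp only [Nat.sub_self] at this
        rcases this with rfl | rfl | rfl
        · exact absurd (Sym2.eq_swap.trans hp1e.symm) hne1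
        · exact Or.inl (by norm_num)
        · exact Or.inr (Or.inl (by norm_num))
      · rcases Sym2.eq_iff.mp hE with ⟨h1, _⟩ | ⟨h1, _⟩
        · exact absurd h1 (hvne 1 0 (by omega) (by omega) (by omega))
        · exact absurd h1 (hvne 1 n (by omega) le_rfl (by omega))
      · rcases Sym2.eq_iff.mp hE with ⟨_, rfl⟩ | ⟨h1, _⟩
        · exact Or.inr (Or.inr rfl)
        · exact absurd h1.symm (hfv 1 (by omega))
      · rcases Sym2.eq_iff.mp hE with ⟨h1, _⟩ | ⟨h1, _⟩
        · exact absurd h1 (hvne 1 0 (by omega) (by omega) (by omega))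
        · exact absurd h1.symm (hgvv 1 (by omega))
    · rintro (rfl | rfl | rfl)
      · have := hadjp' 2 le_rfl hi2; simpa using this
      · have := hadjfE' 2 le_rfl hi2; simpa using this
      · exact hadjE2'
  have hN'mid : ∀ t, 2 ≤ t → t ≤ n-1 → ∀ z,
      C'.Adj (vs t) z ↔ z = vs (t-1) ∨ z = vs (t+1) ∨ z = wE (t+1) := by
    intro t h1 h2 z
    constructor
    · intro h
      obtain ⟨hcase, hne⟩ := (hC'adj _ _).mp h
      rcases hcase with ⟨hE, _, _, _⟩ | hE | hE | hE
      · exact (hNCmid t (by omega) h2 z).mp (C.mem_edgeSet.mp hE)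
      · rcases Sym2.eq_iff.mp hE with ⟨h3, _⟩ | ⟨h3, _⟩
        · exact absurd h3 (hvne t 0 (by omega) (by omega) (by omega))
        · exact absurd h3 (hvne t n (by omega) le_rfl (by omega))
      · rcases Sym2.eq_iff.mp hE with ⟨h3, _⟩ | ⟨h3, _⟩
        · exact absurd h3 (hvne t 1 (by omega) (by omega) (by omega))
        · exact absurd h3.symm (hfv t (by omega))
      · rcases Sym2.eq_iff.mp hE with ⟨h3, _⟩ | ⟨h3, _⟩
        · exact absurd h3 (hvne t 0 (by omega) (by omega) (by omega))
        · exact absurd h3.symm (hgvv t (by omega))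
    · rintro (rfl | rfl | rfl)
      · exact (hadjp' t h1 (by omega)).symm
      · have := hadjp' (t+1) (by omega) (by omega); simpa using this
      · have := hadjfE' (t+1) (by omega) (by omega); simpa using this
  have hN'n : ∀ z, C'.Adj (vs n) z ↔ z = vs (n-1) ∨ z = y1 ∨ z = vs 0 := by
    intro z
    constructor
    · intro h
      obtain ⟨hcase, hne⟩ := (hC'adj _ _).mp h
      rcases hcase with ⟨hE, hne1, hne0, hnei⟩ | hE | hE | hE
      · rcases (hNCn z).mp (C.mem_edgeSet.mp hE) with rfl | rfl | rfl
        · exact Or.inl rfl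
        · exact Or.inr (Or.inl rfl)
        · exact absurd hpi1.symm hnei
      · rcases Sym2.eq_iff.mp hE with ⟨h1, _⟩ | ⟨_, rfl⟩
        · exact absurd h1 (hvne n 0 le_rfl (by omega) (by omega))
        · exact Or.inr (Or.inr rfl)
      · rcases Sym2.eq_iff.mp hE with ⟨h1, _⟩ | ⟨h1, _⟩
        · exact absurd h1 (hvne n 1 le_rfl (by omega) (by omega))
        · exact absurd h1.symm (hfv n le_rfl)
      · rcases Sym2.eq_iff.mp hE with ⟨h1, _⟩ | ⟨h1, _⟩
        · exact absurd h1 (hvne n 0 le_rfl (by omega) (by omega))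
        · exact absurd h1.symm (hgvv n le_rfl)
    · rintro (rfl | rfl | rfl)
      · exact (hadjp' n hi2 le_rfl).symm
      · exact hadjy'
      · exact hadjE1'.symm
  -- single-step helpers in edge-deleted graphs
  have hdel' : ∀ (e : Sym2 W) (u v : W), C'.Adj u v → s(u,v) ≠ e →
      (C'.deleteEdges {e}).Adj u v := by
    intro e u v h hne
    rw [SimpleGraph.deleteEdges_adj]
    exact ⟨h, by simpa using hne⟩
  have hdelC : ∀ (e : Sym2 W) (u v : W), C.Adj u v → s(u,v) ≠ e →
      (C.deleteEdges {e}).Adj u v := by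
    intro e u v h hne
    rw [SimpleGraph.deleteEdges_adj]
    exact ⟨h, by simpa using hne⟩
  have hpi1p0 : p (n+1) ≠ p 0 := by
    rw [hpi1, hp0]
    intro h
    rcases Sym2.eq_iff.mp h with ⟨h1, _⟩ | ⟨_, h2⟩
    · exact hvne n 0 le_rfl (by omega) (by omega) h1
    · exact hgvv 0 (by omega) h2
  -- chains in C' minus an edge
  have hchainC' : ∀ (e : Sym2 W) (a b : ℕ), 1 ≤ a → a ≤ b → b ≤ n →
      (∀ r, a < r → r ≤ b → p r ≠ e) → (C'.deleteEdges {e}).Reachable (vs a) (vs b) := by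
    intro e a b ha hab hbn hne
    refine bs_chain_reach _ _ _ _ hab ?_
    intro t ht ht'
    refine hdel' e _ _ (hadjp' t (by omega) (by omega)) ?_
    rw [← hpe t (by omega) (by omega)]
    exact hne t ht ht'
  -- rerouting the deleted edges of C through C' minus an edge
  have hroute01 : ∀ e : Sym2 W, (∀ r, 2 ≤ r → r ≤ n → p r ≠ e) → s(vs 0, vs n) ≠ e →
      (C'.deleteEdges {e}).Reachable (vs 0) (vs 1) := by
    intro e hp hE1
    exact (hdel' e _ _ hadjE1' hE1).reachable.trans
      (hchainC' e 1 n le_rfl (by omega) le_rfl (fun r h1 h2 => hp r h1 h2)).symm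
  have hroute0fv : ∀ e : Sym2 W, (∀ r, 2 ≤ r → r ≤ n → p r ≠ e) → s(vs 0, vs n) ≠ e →
      s(vs 1, fv) ≠ e → (C'.deleteEdges {e}).Reachable (vs 0) fv := by
    intro e hp hE1 hE2
    exact (hroute01 e hp hE1).trans (hdel' e _ _ hadjE2' hE2).reachable
  have hroutengv : ∀ e : Sym2 W, s(vs 0, vs n) ≠ e → s(vs 0, gv) ≠ e →
      (C'.deleteEdges {e}).Reachable (vs n) gv := by
    intro e hE1 hE3
    exact (hdel' e _ _ hadjE1' hE1).reachable.symm.trans (hdel' e _ _ hadjE3' hE3).reachable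
  -- rerouting the new edges of C' through C minus an edge
  have hrouteC_E1 : ∀ e : Sym2 W, (∀ r, 1 ≤ r → r ≤ n → p r ≠ e) →
      (C.deleteEdges {e}).Reachable (vs 0) (vs n) :=
    fun e hp => hchainC e 0 n (by omega) le_rfl (fun r h1 h2 => hp r h1 h2)
  have hrouteC_E2 : ∀ e : Sym2 W, p 1 ≠ e → p 0 ≠ e →
      (C.deleteEdges {e}).Reachable (vs 1) fv := by
    intro e h1 h0
    refine ((hdelC e _ _ hadjp1 ?_).reachable.symm).trans (hdelC e _ _ hadjp0 ?_).reachable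
    · rw [← hp1e]; exact h1
    · rw [← hp0]; exact h0
  have hrouteC_E3 : ∀ e : Sym2 W, (∀ r, 1 ≤ r → r ≤ n → p r ≠ e) → p (n+1) ≠ e →
      (C.deleteEdges {e}).Reachable (vs 0) gv := by
    intro e hp hi
    refine (hrouteC_E1 e hp).trans (hdelC e _ _ hadjpi ?_).reachable
    rw [← hpi1]; exact hi
  -- the reachability relations agree (generic case: edge untouched by the shift)
  have hrelA : ∀ f : Sym2 W, f ∈ C.edgeSet → f ≠ p 0 → f ≠ p (n+1) →
      (∀ r, 1 ≤ r → r ≤ n → p r ≠ f) →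
      f ≠ s(vs 0, vs n) → f ≠ s(vs 1, fv) → f ≠ s(vs 0, gv) →
      ∀ a b, (C'.deleteEdges {f}).Reachable a b ↔ (C.deleteEdges {f}).Reachable a b := by
    intro f hfC hf0 hfi1 hfp hfE1 hfE2 hfE3 a b
    constructor
    · apply bs_reach_mono
      intro u v huv
      rw [SimpleGraph.deleteEdges_adj] at huv
      obtain ⟨hadj, hne⟩ := huv
      simp only [Set.mem_singleton_iff] at hne
      obtain ⟨hcase, hne'⟩ := (hC'adj u v).mp hadj
      rcases hcase with ⟨hE, h1, h2, h3⟩ | hE | hE | hE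
      · exact (hdelC f u v (C.mem_edgeSet.mp hE) hne).reachable
      · exact bs_reach_of_sym2_eq hE.symm (hrouteC_E1 f hfp)
      · exact bs_reach_of_sym2_eq hE.symm
          (hrouteC_E2 f (hfp 1 le_rfl (by omega)) (Ne.symm hf0))
      · exact bs_reach_of_sym2_eq hE.symm (hrouteC_E3 f hfp (Ne.symm hfi1))
    · apply bs_reach_mono
      intro u v huv
      rw [SimpleGraph.deleteEdges_adj] at huv
      obtain ⟨hadj, hne⟩ := huv
      simp only [Set.mem_singleton_iff] at hne
      by_cases h1 : s(u,v) = p 1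
      · refine bs_reach_of_sym2_eq (h1.trans hp1e).symm
          (hroute01 f (fun r hr1 hr2 => hfp r (by omega) hr2) (Ne.symm hfE1))
      · by_cases h2 : s(u,v) = p 0
        · refine bs_reach_of_sym2_eq (h2.trans hp0).symm
            (hroute0fv f (fun r hr1 hr2 => hfp r (by omega) hr2) (Ne.symm hfE1) (Ne.symm hfE2))
        · by_cases h3 : s(u,v) = p (n+1)
          · exact bs_reach_of_sym2_eq (h3.trans hpi1).symm
              (hroutengv f (Ne.symm hfE1) (Ne.symm hfE3))
          · exact (hdel' f u v (hkept u v hadj h1 h2 h3) hne).reachable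
  -- the p 0 / s(vs 1, fv) case
  have hrel0 : ∀ a b, (C'.deleteEdges {s(vs 1, fv)}).Reachable a b ↔
      (C.deleteEdges {p 0}).Reachable a b := by
    intro a b
    constructor
    · apply bs_reach_mono
      intro u v huv
      rw [SimpleGraph.deleteEdges_adj] at huv
      obtain ⟨hadj, hne⟩ := huv
      simp only [Set.mem_singleton_iff] at hne
      obtain ⟨hcase, hne'⟩ := (hC'adj u v).mp hadj
      rcases hcase with ⟨hE, h1, h2, h3⟩ | hE | hE | hE
      · exact (hdelC _ u v (C.mem_edgeSet.mp hE) h2).reachable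
      · exact bs_reach_of_sym2_eq hE.symm (hrouteC_E1 (p 0) hpp0)
      · exact absurd hE hne
      · exact bs_reach_of_sym2_eq hE.symm (hrouteC_E3 (p 0) hpp0 hpi1p0)
    · apply bs_reach_mono
      intro u v huv
      rw [SimpleGraph.deleteEdges_adj] at huv
      obtain ⟨hadj, hne⟩ := huv
      simp only [Set.mem_singleton_iff] at hne
      by_cases h1 : s(u,v) = p 1
      · exact bs_reach_of_sym2_eq (h1.trans hp1e).symm
          (hroute01 _ (fun r hr1 hr2 => hpE2 r (by omega) hr2) hE1E2)
      · by_cases h3 : s(u,v) = p (n+1)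
        · exact bs_reach_of_sym2_eq (h3.trans hpi1).symm
            (hroutengv _ hE1E2 (Ne.symm hE2E3))
        · refine (hdel' _ u v (hkept u v hadj h1 hne h3) ?_).reachable
          intro heq
          exact hE2C (heq ▸ C.mem_edgeSet.mpr hadj)
  -- the p (n+1) / s(vs 0, gv) case
  have hrel2 : ∀ a b, (C'.deleteEdges {s(vs 0, gv)}).Reachable a b ↔
      (C.deleteEdges {p (n+1)}).Reachable a b := by
    intro a b
    constructor
    · apply bs_reach_mono
      intro u v huv
      rw [SimpleGraph.deleteEdges_adj] at huv
      obtain ⟨hadj, hne⟩ := huv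
      simp only [Set.mem_singleton_iff] at hne
      obtain ⟨hcase, hne'⟩ := (hC'adj u v).mp hadj
      rcases hcase with ⟨hE, h1, h2, h3⟩ | hE | hE | hE
      · exact (hdelC _ u v (C.mem_edgeSet.mp hE) h3).reachable
      · exact bs_reach_of_sym2_eq hE.symm (hrouteC_E1 (p (n+1)) hppi1)
      · exact bs_reach_of_sym2_eq hE.symm
          (hrouteC_E2 (p (n+1)) (hppi1 1 le_rfl (by omega)) (Ne.symm hpi1p0))
      · exact absurd hE hne
    · apply bs_reach_mono
      intro u v huv
      rw [SimpleGraph.deleteEdges_adj] at huv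
      obtain ⟨hadj, hne⟩ := huv
      simp only [Set.mem_singleton_iff] at hne
      by_cases h1 : s(u,v) = p 1
      · exact bs_reach_of_sym2_eq (h1.trans hp1e).symm
          (hroute01 _ (fun r hr1 hr2 => hpE3 r (by omega) hr2) hE1E3)
      · by_cases h2 : s(u,v) = p 0
        · exact bs_reach_of_sym2_eq (h2.trans hp0).symm
            (hroute0fv _ (fun r hr1 hr2 => hpE3 r (by omega) hr2) hE1E3 hE2E3)
        · refine (hdel' _ u v (hkept u v hadj h1 h2 hne) ?_).reachable
          intro heq
          exact hE3C (heq ▸ C.mem_edgeSet.mpr hadj)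
  have hrelx : ∀ a b, (C'.deleteEdges {x}).Reachable a b ↔
      (C.deleteEdges {x}).Reachable a b :=
    hrelA x hxE (Ne.symm hp0x) hxpi1 hpx hxE1 hxE2 hxE3
  have hrely : ∀ a b, (C'.deleteEdges {y}).Reachable a b ↔
      (C.deleteEdges {y}).Reachable a b :=
    hrelA y hyE hyp0 (Ne.symm hpi1y) hpy hyE1 hyE2 hyE3
  have hrelfE : ∀ t, 2 ≤ t → t ≤ n → ∀ a b, (C'.deleteEdges {fE t}).Reachable a b ↔
      (C.deleteEdges {fE t}).Reachable a b := by
    intro t h1 h2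
    exact hrelA (fE t) (hfE t h1 h2).1 (hfEp0 t h1 h2) (hfEpi1 t h1 h2)
      (fun r hr1 hr2 => hpfE r t hr1 hr2 h1 h2) (hfEE1 t h1 h2) (hfEE2 t h1 h2) (hfEE3 t h1 h2)
  have hadjP' : ∀ t, 1 ≤ t → t ≤ m → C'.Adj (vs' (t-1)) (vs' t) := by
    intro t h1 h2
    exact C'.mem_edgeSet.mp (by rw [← hpe' t h1 h2]; exact hpedge' t h1 h2)
  have hfE2w : fE 2 = s(vs 1, wE 2) := hwspec 2 le_rfl hi2
  have hadjw2 : C.Adj (vs 1) (wE 2) := by simpa using hadjw 2 le_rfl hi2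
  -- Step O : the path of d' starts at vs 1
  have hO : vs' 0 = vs 1 ∧ X0 = wE 2 := by
    rcases Sym2.eq_iff.mp (hxe'.symm.trans hfE2w) with ⟨hA, hB⟩ | ⟨hA, hB⟩
    · exfalso
      have hpath : (C'.deleteEdges {fE 2}).Reachable (vs' 0) (vs' m) := by
        refine bs_chain_reach _ _ 0 m (by omega) ?_
        intro t ht ht'
        refine hdel' _ _ _ (hadjP' t (by omega) ht') ?_
        rw [hxe']
        intro heq
        rcases Sym2.eq_iff.mp heq with ⟨h3, _⟩ | ⟨_, h4⟩
        · exact hX0v (t-1) (by omega) h3.symm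
        · exact hX0v t ht' h4.symm
      rw [hB] at hpath
      have h5 := (hrelfE 2 le_rfl hi2 _ _).mp hpath
      have h6 : (C.deleteEdges {fE 2}).Reachable (vs 1) (vs 0) :=
        (hdelC _ _ _ hadjp1 (by rw [← hp1e]; exact hpfE 1 2 le_rfl (by omega) le_rfl hi2)).reachable.symm
      have h7 : (C.deleteEdges {fE 2}).Reachable (vs 0) x0 :=
        (hdelC _ _ _ hadjx (by rw [show s(x0, vs 0) = x from hxe.symm]; exact hxfE 2 le_rfl hi2)).reachable.symm
      have hend : vs' m = x0 ∨ vs' m = vs 0 := by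
        rcases Sym2.eq_iff.mp (hxe.symm.trans hye') with ⟨h1, _⟩ | ⟨_, h2⟩
        · exact Or.inl h1.symm
        · exact Or.inr h2.symm
      have hreach : (C.deleteEdges {fE 2}).Reachable (vs 1) (wE 2) := by
        rcases hend with he | he
        · rw [he] at h5
          exact (h6.trans h7).trans h5.symm
        · rw [he] at h5
          exact h6.trans h5.symm
      apply hsep (vs 1) (wE 2) hadjw2
      rw [← hfE2w]
      exact hreach
    · exact ⟨hB, hA⟩
  -- Step E : the path of d' ends at vs 0
  have hEnd : vs' m = vs 0 ∧ Y1 = x0 := by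
    rcases Sym2.eq_iff.mp (hxe.symm.trans hye') with ⟨h1, h2⟩ | ⟨h1, h2⟩
    · exfalso
      have hpath : (C'.deleteEdges {x}).Reachable (vs' 0) (vs' m) := by
        refine bs_chain_reach _ _ 0 m (by omega) ?_
        intro t ht ht'
        refine hdel' _ _ _ (hadjP' t (by omega) ht') ?_
        rw [hye']
        intro heq
        rcases Sym2.eq_iff.mp heq with ⟨_, h4⟩ | ⟨h3, _⟩
        · exact hY1v t ht' h4.symm
        · exact hY1v (t-1) (by omega) h3.symm
      rw [hO.1, ← h1] at hpath
      have htrans := (hrelx _ _).mp hpath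
      have hstep : (C.deleteEdges {x}).Reachable (vs 1) (vs 0) :=
        (hdelC _ _ _ hadjp1 (by rw [← hp1e]; exact hpx 1 le_rfl (by omega))).reachable.symm
      have hres := htrans.symm.trans hstep
      rw [hxe] at hres
      exact hsep x0 (vs 0) hadjx hres
    · exact ⟨h2.symm, h1.symm⟩
  -- tail of the d' path avoiding an edge
  have htail : ∀ (e : Sym2 W) (t0 : ℕ), t0 ≤ m →
      (∀ s, t0 < s → s ≤ m → s(vs' (s-1), vs' s) ≠ e) →
      (C'.deleteEdges {e}).Reachable (vs' t0) (vs' m) := by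
    intro e t0 h0 hne
    refine bs_chain_reach _ _ t0 m h0 ?_
    intro t ht ht'
    exact hdel' _ _ _ (hadjP' t (by omega) ht') (hne t ht ht')
  have hedgene : ∀ (s t : ℕ), s ≤ m → t ≤ m → 1 ≤ t → t < s →
      s(vs' (s-1), vs' s) ≠ s(vs' (t-1), vs' t) := by
    intro s t hs ht h1 hts heq
    rcases Sym2.eq_iff.mp heq with ⟨h3, _⟩ | ⟨h3, h4⟩
    · have := hvsinj' (s-1) (t-1) (by omega) (by omega) h3
      omega
    · have e1 := hvsinj' (s-1) t (by omega) ht h3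
      have e2 := hvsinj' s (t-1) hs (by omega) h4
      omega
  -- Step M : the path of d' follows the old path
  have hM : ∀ t, t ≤ n - 1 → t ≤ m → vs' t = vs (t+1) := by
    intro t
    induction t using Nat.strong_induction_on with
    | _ t ih =>
      intro htn htm
      rcases Nat.eq_zero_or_pos t with rfl | hpos
      · simpa using hO.1
      · have hprev : vs' (t-1) = vs t := by
          have := ih (t-1) (by omega) (by omega) (by omega)
          rw [show t-1+1 = t from by omega] at this
          exact this
        have hadj : C'.Adj (vs t) (vs' t) := hprev ▸ hadjP' t (by omega) htm
        rcases Nat.lt_or_ge t 2 with h2 | h2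
        · have ht1 : t = 1 := by omega
          subst ht1
          rcases (hN'1 (vs' 1)).mp hadj with h | h | h
          · rw [h]
          · exact absurd (h.trans hO.2.symm).symm (hX0v 1 htm)
          · exfalso
            have htr : (C'.deleteEdges {s(vs 1, fv)}).Reachable (vs' 1) (vs' m) := by
              refine htail _ 1 htm ?_
              intro s hs1 hsm heq
              have heq2 : s(vs' (s-1), vs' s) = s(vs' 0, vs' 1) := by
                rw [heq, hO.1, h]
              exact hedgene s 1 hsm htm le_rfl hs1 heq2
            rw [h] at htr
            have h5 := (hrel0 _ _).mp htr
            rw [hEnd.1] at h5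
            apply hsep (vs 0) fv hadjp0
            rw [← hp0]
            exact h5.symm
        · rcases (hN'mid t h2 htn (vs' t)).mp hadj with h | h | h
          · exfalso
            have hprev2 : vs' (t-2) = vs (t-1) := by
              have := ih (t-2) (by omega) (by omega) (by omega)
              rw [show t-2+1 = t-1 from by omega] at this
              exact this
            have := hvsinj' t (t-2) htm (by omega) (h.trans hprev2.symm)
            omega
          · rw [h]
          · exfalso
            have hfEt1 : fE (t+1) = s(vs t, wE (t+1)) := by
              have := hwspec (t+1) (by omega) (by omega)
              rwa [show t+1-1 = t from by omega] at this
            have htr : (C'.deleteEdges {fE (t+1)}).Reachable (vs' t) (vs' m) := by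
              refine htail _ t htm ?_
              intro s hs1 hsm heq
              have heq2 : s(vs' (s-1), vs' s) = s(vs' (t-1), vs' t) := by
                rw [heq, hfEt1, ← hprev, ← h]
              exact hedgene s t hsm htm (by omega) hs1 heq2
            rw [h] at htr
            have h5 := (hrelfE (t+1) (by omega) (by omega) _ _).mp htr
            rw [hEnd.1] at h5
            apply hsep (vs t) (wE (t+1)) (by simpa using hadjw (t+1) (by omega) (by omega))
            rw [← hfEt1]
            have hch0 : (C.deleteEdges {fE (t+1)}).Reachable (vs 0) (vs t) :=
              hchainC _ 0 t (by omega) (by omega)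
                (fun r h1' h2' => hpfE r (t+1) h1' (by omega) (by omega) (by omega))
            exact hch0.symm.trans h5.symm
  -- the two paths have the same length
  have hge : n ≤ m := by
    by_contra hcon
    push_neg at hcon
    have h1 := hM m (by omega) le_rfl
    rw [hEnd.1] at h1
    have := hvsinj 0 (m+1) (by omega) (by omega) h1
    omega
  have hle : m ≤ n := by
    by_contra hcon
    push_neg at hcon
    have hprevn : vs' (n-1) = vs n := by
      have := hM (n-1) (by omega) (by omega)
      rwa [show n-1+1 = n from by omega] at this
    have hadj : C'.Adj (vs n) (vs' n) := hprevn ▸ hadjP' n (by omega) (by omega)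
    rcases (hN'n (vs' n)).mp hadj with hcase | hcase | hcase
    · have hprev2 : vs' (n-2) = vs (n-1) := by
        have := hM (n-2) (by omega) (by omega)
        rwa [show n-2+1 = n-1 from by omega] at this
      have := hvsinj' n (n-2) (by omega) (by omega) (hcase.trans hprev2.symm)
      omega
    · have htr : (C'.deleteEdges {y}).Reachable (vs' n) (vs' m) := by
        refine htail _ n (by omega) ?_
        intro s hs1 hsm heq
        have heq2 : s(vs' (s-1), vs' s) = s(vs' (n-1), vs' n) := by
          rw [heq, hye, ← hprevn, ← hcase]
        exact hedgene s n hsm (by omega) (by omega) hs1 heq2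
      rw [hcase] at htr
      have h5 := (hrely _ _).mp htr
      rw [hEnd.1] at h5
      apply hsep (vs n) y1 hadjy
      have hch0 : (C.deleteEdges {y}).Reachable (vs 0) (vs n) :=
        hchainC _ 0 n (by omega) le_rfl (fun r h1' h2' => hpy r h1' h2')
      have hres := hch0.symm.trans h5.symm
      rw [hye] at hres
      exact hres
    · have := hvsinj' n m (by omega) le_rfl (hcase.trans hEnd.1.symm)
      omega
  have hmn : m = n := le_antisymm hle hge
  subst hmn
  have hvs'1 : vs' 1 = vs 2 := by
    have := hM 1 (by omega) (by omega); simpa using this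
  -- pin the extremal third edges of d'
  have hP'0 : P' 0 = s(vs 1, fv) := by
    have hform : P' 0 = s(vs 1, FV) := by rw [hP0, hO.1]
    have hadjFV : C'.Adj (vs 1) FV := C'.mem_edgeSet.mp (by rw [← hform]; exact hP0edge)
    rcases (hN'1 FV).mp hadjFV with h | h | h
    · exfalso
      apply hP0p1
      have hpe'1 : P' 1 = s(vs' 0, vs' 1) := by simpa using hpe' 1 le_rfl hm1
      rw [hform, h, hpe'1, hO.1, hvs'1]
    · exfalso
      apply hP0x
      rw [hform, h, hfE2w]
    · rw [hform, h]
  have hP'i1 : P' (m+1) = s(vs 0, gv) := by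
    have hform : P' (m+1) = s(vs 0, GV) := by rw [hPi1, hEnd.1]
    have hadjGV : C'.Adj (vs 0) GV := C'.mem_edgeSet.mp (by rw [← hform]; exact hPi1edge)
    rcases (hN'0 GV).mp hadjGV with h | h | h
    · exfalso
      apply hPi1y
      rw [hform, h, hxe]
      exact Sym2.eq_swap
    · exfalso
      apply hPi1pi
      have hvs'n1 : vs' (m-1) = vs m := by
        have := hM (m-1) (by omega) (by omega)
        rwa [show m-1+1 = m from by omega] at this
      rw [hform, h, hpe' m hm1 le_rfl, hvs'n1, hEnd.1]
      exact Sym2.eq_swap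
    · rw [hform, h]
  have hFE'mid : ∀ t, 2 ≤ t → t ≤ m-1 → FE' t = fE (t+1) := by
    intro t h1 h2
    obtain ⟨hedge, hmem, hne1, hne2⟩ := hfE' t h1 (by omega)
    have hprevt : vs' (t-1) = vs t := by
      have := hM (t-1) (by omega) (by omega)
      rwa [show t-1+1 = t from by omega] at this
    rw [hprevt] at hmem
    obtain ⟨z, hz⟩ : ∃ z, s(vs t, z) = FE' t := ⟨_, Sym2.other_spec hmem⟩
    have hadjz : C'.Adj (vs t) z := C'.mem_edgeSet.mp (by rw [hz]; exact hedge)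
    have hfEt1 : fE (t+1) = s(vs t, wE (t+1)) := by
      have := hwspec (t+1) (by omega) (by omega)
      rwa [show t+1-1 = t from by omega] at this
    rcases (hN'mid t h1 h2 z).mp hadjz with h | h | h
    · exfalso
      apply hne1
      have hprev2 : vs' (t-2) = vs (t-1) := by
        have := hM (t-2) (by omega) (by omega)
        rwa [show t-2+1 = t-1 from by omega] at this
      rw [← hz, h, hpe' (t-1) (by omega) (by omega), show t-1-1 = t-2 from by omega,
        hprev2, hprevt]
      exact Sym2.eq_swap
    · exfalso
      apply hne2
      have hvt : vs' t = vs (t+1) := hM t h2 (by omega)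
      rw [← hz, h, hpe' t (by omega) (by omega), hprevt, hvt]
    · rw [← hz, h, hfEt1]
  have hFE'n : FE' m = y := by
    obtain ⟨hedge, hmem, hne1, hne2⟩ := hfE' m hi2 le_rfl
    have hprevt : vs' (m-1) = vs m := by
      have := hM (m-1) (by omega) (by omega)
      rwa [show m-1+1 = m from by omega] at this
    rw [hprevt] at hmem
    obtain ⟨z, hz⟩ : ∃ z, s(vs m, z) = FE' m := ⟨_, Sym2.other_spec hmem⟩
    have hadjz : C'.Adj (vs m) z := C'.mem_edgeSet.mp (by rw [hz]; exact hedge)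
    rcases (hN'n z).mp hadjz with h | h | h
    · exfalso
      apply hne1
      have hprev2 : vs' (m-2) = vs (m-1) := by
        have := hM (m-2) (by omega) (by omega)
        rwa [show m-2+1 = m-1 from by omega] at this
      rw [← hz, h, hpe' (m-1) (by omega) (by omega), show m-1-1 = m-2 from by omega,
        hprev2, hprevt]
      exact Sym2.eq_swap
    · rw [← hz, h, hye]
    · exfalso
      apply hne2
      rw [← hz, h, hpe' m hm1 le_rfl, hprevt, hEnd.1]
  -- membership helpers
  have hmemx : ∀ a, a ∈ x → a = x0 ∨ a = vs 0 := by
    intro a ha; rw [hxe] at ha; exact Sym2.mem_iff.mp ha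
  have hmemy : ∀ b, b ∈ y → b = vs m ∨ b = y1 := by
    intro b hb; rw [hye] at hb; exact Sym2.mem_iff.mp hb
  have hmemfE2 : ∀ a, a ∈ fE 2 → a = vs 1 ∨ a = wE 2 := by
    intro a ha; rw [hfE2w] at ha; exact Sym2.mem_iff.mp ha
  -- endpoint connections
  have hconxy : ∀ (e : Sym2 W), (∀ r, 1 ≤ r → r ≤ m → p r ≠ e) → x ≠ e → y ≠ e →
      ∀ a ∈ x, ∀ b ∈ y, (C.deleteEdges {e}).Reachable a b := by
    intro e hp hx' hy' a ha b hb
    have c1 : (C.deleteEdges {e}).Reachable x0 (vs 0) :=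
      (hdelC _ _ _ hadjx (by rw [show s(x0, vs 0) = x from hxe.symm]; exact hx')).reachable
    have c2 : (C.deleteEdges {e}).Reachable (vs 0) (vs m) :=
      hchainC e 0 m (by omega) le_rfl (fun r h1 h2 => hp r h1 h2)
    have c3 : (C.deleteEdges {e}).Reachable (vs m) y1 :=
      (hdelC _ _ _ hadjy (by rw [show s(vs m, y1) = y from hye.symm]; exact hy')).reachable
    rcases hmemx a ha with rfl | rfl <;> rcases hmemy b hb with rfl | rfl
    · exact c1.trans c2
    · exact (c1.trans c2).trans c3
    · exact c2
    · exact c2.trans c3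
  have hconxx : ∀ a ∈ x, ∀ b ∈ x, (C.deleteEdges {y}).Reachable a b := by
    intro a ha b hb
    have c1 : (C.deleteEdges {y}).Reachable x0 (vs 0) :=
      (hdelC _ _ _ hadjx (by rw [show s(x0, vs 0) = x from hxe.symm]; exact hxy)).reachable
    rcases hmemx a ha with rfl | rfl <;> rcases hmemx b hb with rfl | rfl
    · exact SimpleGraph.Reachable.refl _
    · exact c1
    · exact c1.symm
    · exact SimpleGraph.Reachable.refl _
  have hconfEy : ∀ a ∈ fE 2, ∀ b ∈ y, (C.deleteEdges {x}).Reachable a b := by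
    intro a ha b hb
    have c0 : (C.deleteEdges {x}).Reachable (vs 1) (wE 2) :=
      (hdelC _ _ _ hadjw2 (by rw [← hfE2w]; exact fun h => hxfE 2 le_rfl hi2 h.symm)).reachable
    have c2 : (C.deleteEdges {x}).Reachable (vs 1) (vs m) :=
      hchainC x 1 m (by omega) le_rfl (fun r h1 h2 => hpx r (by omega) h2)
    have c3 : (C.deleteEdges {x}).Reachable (vs m) y1 :=
      (hdelC _ _ _ hadjy (by rw [show s(vs m, y1) = y from hye.symm]; exact hxy.symm)).reachable
    rcases hmemfE2 a ha with rfl | rfl <;> rcases hmemy b hb with rfl | rfl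
    · exact c2
    · exact c2.trans c3
    · exact c0.symm.trans c2
    · exact (c0.symm.trans c2).trans c3
  -- final assembly
  simp only [BranchData.part]
  by_cases hj0 : j = 0
  · subst hj0
    rw [show (if (0:ℕ) = m + 1 then 1 else if 1 ≤ 0 ∧ 0 ≤ m then 0 + 1 else 0) = 0 from by
        rw [if_neg (show ¬((0:ℕ) = m + 1) by omega), if_neg (show ¬(1 ≤ 0 ∧ 0 ≤ m) by omega)]]
    rw [if_pos (show (0:ℕ) = 0 from rfl), if_pos (show (0:ℕ) = 0 from rfl), hP'0,
      bs_sideOpp_transfer hrel0 (hconxy (p 0) hpp0 (Ne.symm hp0x) hyp0)]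
  · by_cases hj1 : j = 1
    · subst hj1
      rw [show (if (1:ℕ) = m + 1 then 1 else if 1 ≤ 1 ∧ 1 ≤ m then 1 + 1 else 1) = 2 from by
          rw [if_neg (show ¬((1:ℕ) = m + 1) by omega), if_pos (show 1 ≤ 1 ∧ 1 ≤ m by omega)]]
      rw [if_neg (show ¬((1:ℕ) = 0) by omega), if_pos (show (1:ℕ) = 1 from rfl),
        if_neg (show ¬((2:ℕ) = 0) by omega), if_neg (show ¬((2:ℕ) = 1) by omega),
        if_pos (show 2 ≤ m from hi2),
        bs_sideOpp_transfer (hrelfE 2 le_rfl hi2)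
          (hconxy (fE 2) (fun r h1 h2 => hpfE r 2 h1 h2 le_rfl hi2) (hxfE 2 le_rfl hi2)
            (hyfE 2 le_rfl hi2))]
    · by_cases hjmid : 2 ≤ j ∧ j ≤ m - 1
      · rw [show (if j = m + 1 then 1 else if 1 ≤ j ∧ j ≤ m then j + 1 else j) = j + 1 from by
            rw [if_neg (show ¬(j = m + 1) by omega), if_pos (show 1 ≤ j ∧ j ≤ m by omega)]]
        rw [if_neg hj0, if_neg hj1, if_pos (show j ≤ m by omega),
          hFE'mid j hjmid.1 hjmid.2,
          if_neg (show ¬(j + 1 = 0) by omega), if_neg (show ¬(j + 1 = 1) by omega),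
          if_pos (show j + 1 ≤ m by omega),
          bs_sideOpp_transfer (hrelfE (j+1) (by omega) (by omega))
            (hconxy (fE (j+1)) (fun r h1 h2 => hpfE r (j+1) h1 h2 (by omega) (by omega))
              (hxfE (j+1) (by omega) (by omega)) (hyfE (j+1) (by omega) (by omega)))]
      · by_cases hjn : j = m
        · subst hjn
          rw [show (if j = j + 1 then 1 else if 1 ≤ j ∧ j ≤ j then j + 1 else j) = j + 1 from by
              rw [if_neg (show ¬(j = j + 1) by omega), if_pos (show 1 ≤ j ∧ j ≤ j by omega)]]
          rw [if_neg (show ¬(j = 0) by omega), if_neg (show ¬(j = 1) by omega),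
            if_pos (show j ≤ j from le_rfl), hFE'n,
            if_neg (show ¬(j + 1 = 0) by omega), if_neg (show ¬(j + 1 = 1) by omega),
            if_neg (show ¬(j + 1 ≤ j) by omega), if_pos (show j + 1 = j + 1 from rfl),
            bs_sideOpp_transfer hrely hconxx]
        · by_cases hjn1 : j = m + 1
          · subst hjn1
            rw [show (if m + 1 = m + 1 then 1 else if 1 ≤ m + 1 ∧ m + 1 ≤ m then m + 1 + 1
                  else m + 1) = 1 from by rw [if_pos (show m + 1 = m + 1 from rfl)]]
            rw [if_neg (show ¬(m + 1 = 0) by omega), if_neg (show ¬(m + 1 = 1) by omega),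
              if_neg (show ¬(m + 1 ≤ m) by omega), if_pos (show m + 1 = m + 1 from rfl),
              if_neg (show ¬((1:ℕ) = 0) by omega), if_pos (show (1:ℕ) = 1 from rfl),
              bs_sideOpp_transfer hrelx hconfEy]
          · have hjn2 : j = m + 2 := by omega
            subst hjn2
            rw [show (if m + 2 = m + 1 then 1 else if 1 ≤ m + 2 ∧ m + 2 ≤ m then m + 2 + 1
                  else m + 2) = m + 2 from by
              rw [if_neg (show ¬(m + 2 = m + 1) by omega),
                if_neg (show ¬(1 ≤ m + 2 ∧ m + 2 ≤ m) by omega)]]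
            rw [if_neg (show ¬(m + 2 = 0) by omega), if_neg (show ¬(m + 2 = 0) by omega),
              if_neg (show ¬(m + 2 = 1) by omega), if_neg (show ¬(m + 2 = 1) by omega),
              if_neg (show ¬(m + 2 ≤ m) by omega), if_neg (show ¬(m + 2 ≤ m) by omega),
              if_neg (show ¬(m + 2 = m + 1) by omega), if_neg (show ¬(m + 2 = m + 1) by omega),
              hP'i1,
              bs_sideOpp_transfer hrel2 (hconxy (p (m+1)) hppi1 hxpi1 (Ne.symm hpi1y))]
end

section
/- Let (C',φ) be the branch shift of x to y applied to a tree position (C,φ) of G, where x and y are nonadjacent edges of C. Then every edge of C that does not lie on the simple path from x to y has the same width in (C',φ) as it had in (C,φ). -/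
attribute [local instance] Classical.propDecidable

open SimpleGraph

/-! ### Auxiliary lemmas for Statement 14 -/

section AuxGeneral

variable {W : Type*}

lemma aux_reach_trans {G G' : SimpleGraph W}
    (h : ∀ a b : W, G.Adj a b → G'.Reachable a b) {a b : W} (hr : G.Reachable a b) :
    G'.Reachable a b := by
  obtain ⟨p⟩ := hr
  induction p with
  | nil => exact SimpleGraph.Reachable.refl _
  | cons h' _ ih => exact (h _ _ h').trans ih

lemma aux_reach_sym2 {G : SimpleGraph W} {a b c e : W} (h : s(a, b) = s(c, e))
    (hr : G.Reachable c e) : G.Reachable a b := by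
  rw [Sym2.eq_iff] at h
  rcases h with ⟨rfl, rfl⟩ | ⟨rfl, rfl⟩
  · exact hr
  · exact hr.symm

lemma aux_chain {G : SimpleGraph W} (vs : ℕ → W) :
    ∀ s t : ℕ, s ≤ t → (∀ r, s ≤ r → r < t → G.Reachable (vs r) (vs (r + 1))) →
      G.Reachable (vs s) (vs t) := by
  intro s t hst
  induction t, hst using Nat.le_induction with
  | base => intro _; exact SimpleGraph.Reachable.refl _
  | succ n hn ih =>
    intro h
    exact (ih fun r h1 h2 => h r h1 (h2.trans n.lt_succ_self)).trans (h n hn n.lt_succ_self)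

lemma aux_walk_split {G : SimpleGraph W} {z1 z2 : W} :
    ∀ {a b : W} (p : G.Walk a b), p.edges.Nodup → s(z1, z2) ∈ p.edges →
      ((G.deleteEdges {s(z1, z2)}).Reachable a z1 ∧
        (G.deleteEdges {s(z1, z2)}).Reachable z2 b) ∨
      ((G.deleteEdges {s(z1, z2)}).Reachable a z2 ∧
        (G.deleteEdges {s(z1, z2)}).Reachable z1 b) := by
  intro a b p
  induction p with
  | nil => simp
  | @cons a c b' h q ih =>
    intro hnd hmem
    rw [SimpleGraph.Walk.edges_cons] at hnd hmem
    rw [List.nodup_cons] at hnd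
    rcases List.mem_cons.mp hmem with heq | hmem'
    · have hq : ∀ e ∈ q.edges, e ∉ ({s(z1, z2)} : Set (Sym2 W)) := by
        intro e he hse
        apply hnd.1
        rw [Set.mem_singleton_iff] at hse
        rw [hse, heq] at he
        exact he
      have hr : (G.deleteEdges {s(z1, z2)}).Reachable c b' := ⟨q.toDeleteEdges _ hq⟩
      rw [Sym2.eq_iff] at heq
      rcases heq with ⟨rfl, rfl⟩ | ⟨rfl, rfl⟩
      · exact Or.inl ⟨SimpleGraph.Reachable.refl _, hr⟩
      · exact Or.inr ⟨SimpleGraph.Reachable.refl _, hr⟩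
    · have hne : s(a, c) ≠ s(z1, z2) := fun hh => hnd.1 (hh ▸ hmem')
      have hadj : (G.deleteEdges {s(z1, z2)}).Adj a c := by
        rw [SimpleGraph.deleteEdges_adj]
        exact ⟨h, by simpa using hne⟩
      rcases ih hnd.2 hmem' with ⟨h1, h2⟩ | ⟨h1, h2⟩
      · exact Or.inl ⟨hadj.reachable.trans h1, h2⟩
      · exact Or.inr ⟨hadj.reachable.trans h1, h2⟩

lemma aux_passes_iff {G : SimpleGraph W} {z1 z2 a b : W}
    (hbr : ¬(G.deleteEdges {s(z1, z2)}).Reachable z1 z2)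
    (hreach : G.Reachable a b) :
    passesThrough G s(z1, z2) a b ↔ ¬(G.deleteEdges {s(z1, z2)}).Reachable a b := by
  constructor
  · rintro ⟨p, hp, hmem⟩ hr
    rcases aux_walk_split p hp.isTrail.edges_nodup hmem with ⟨h1, h2⟩ | ⟨h1, h2⟩
    · exact hbr ((h1.symm.trans hr).trans h2.symm)
    · exact hbr ((h2.trans hr.symm).trans h1)
  · intro hnr
    obtain ⟨p⟩ := hreach
    by_cases hmem : s(z1, z2) ∈ (p.toPath : G.Walk a b).edges
    · exact ⟨(p.toPath : G.Walk a b), p.toPath.2, hmem⟩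
    · exact absurd ⟨(p.toPath : G.Walk a b).toDeleteEdges {s(z1, z2)}
        (by intro e he hse; rw [Set.mem_singleton_iff] at hse; exact hmem (hse ▸ he))⟩ hnr

lemma aux_bridge {G : SimpleGraph W} (hG : G.IsAcyclic) {a b : W} (h : G.Adj a b) :
    ¬(G.deleteEdges {s(a, b)}).Reachable a b := by
  have hb := (SimpleGraph.isAcyclic_iff_forall_adj_isBridge.mp hG) h
  rw [SimpleGraph.isBridge_iff] at hb
  exact hb

end AuxGeneral

section AuxBranch

variable {W : Type*} {C : SimpleGraph W} {x y : Sym2 W} (d : BranchData C x y)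

lemma aux_pe1 : d.p 1 = s(d.vs 0, d.vs 1) := by
  have := d.hpe 1 le_rfl d.hi1
  simpa using this

lemma aux_adj_step (r : ℕ) (hr : r < d.i) : C.Adj (d.vs r) (d.vs (r + 1)) := by
  have h1 : 1 ≤ r + 1 := by omega
  have h2 : r + 1 ≤ d.i := by omega
  have := d.hpedge (r + 1) h1 h2
  rwa [d.hpe (r + 1) h1 h2, Nat.add_sub_cancel, SimpleGraph.mem_edgeSet] at this

lemma aux_chain_del (e : Sym2 W) (he : ∀ r, 1 ≤ r → r ≤ d.i → e ≠ d.p r)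
    (s t : ℕ) (hst : s ≤ t) (ht : t ≤ d.i) :
    (C.deleteEdges {e}).Reachable (d.vs s) (d.vs t) := by
  apply aux_chain d.vs s t hst
  intro r h1 h2
  have hadj : C.Adj (d.vs r) (d.vs (r + 1)) := aux_adj_step d r (by omega)
  refine SimpleGraph.Adj.reachable ?_
  rw [SimpleGraph.deleteEdges_adj]
  refine ⟨hadj, ?_⟩
  rw [Set.mem_singleton_iff]
  intro hh
  exact he (r + 1) (by omega) (by omega)
    (by rw [d.hpe (r + 1) (by omega) (by omega), Nat.add_sub_cancel]; exact hh.symm)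

lemma aux_p0_ne_p (t : ℕ) (h1 : 1 ≤ t) (h2 : t ≤ d.i) : d.p 0 ≠ d.p t := by
  rcases eq_or_ne t 1 with rfl | hne
  · exact d.hp0p1
  · rw [d.hp0, d.hpe t h1 h2]
    intro h
    rw [Sym2.eq_iff] at h
    rcases h with ⟨h1', _⟩ | ⟨h1', _⟩
    · have := d.hvsinj 0 (t - 1) (by omega) (by omega) h1'
      omega
    · have := d.hvsinj 0 t (by omega) h2 h1'
      omega

lemma aux_pi1_ne_p (t : ℕ) (h1 : 1 ≤ t) (h2 : t ≤ d.i) : d.p (d.i + 1) ≠ d.p t := by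
  rcases eq_or_ne t d.i with rfl | hne
  · exact d.hpi1pi
  · rw [d.hpi1, d.hpe t h1 h2]
    intro h
    rw [Sym2.eq_iff] at h
    rcases h with ⟨h1', _⟩ | ⟨h1', _⟩
    · have := d.hvsinj d.i (t - 1) le_rfl (by omega) h1'
      omega
    · have := d.hvsinj d.i t le_rfl h2 h1'
      omega

lemma aux_p_inj (t t' : ℕ) (h1 : 1 ≤ t) (h2 : t ≤ d.i) (h1' : 1 ≤ t') (h2' : t' ≤ d.i)
    (h : d.p t = d.p t') : t = t' := by
  rw [d.hpe t h1 h2, d.hpe t' h1' h2'] at h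
  rw [Sym2.eq_iff] at h
  rcases h with ⟨ha, hb⟩ | ⟨ha, hb⟩
  · exact d.hvsinj t t' h2 h2' hb
  · have q1 := d.hvsinj (t - 1) t' (by omega) h2' ha
    have q2 := d.hvsinj t (t' - 1) h2 (by omega) hb
    omega

lemma aux_vs0_ne_fv : d.vs 0 ≠ d.fv := by
  have h : C.Adj (d.vs 0) d.fv := by
    rw [← SimpleGraph.mem_edgeSet, ← d.hp0]; exact d.hp0edge
  exact h.ne

lemma aux_vsi_ne_gv : d.vs d.i ≠ d.gv := by
  have h : C.Adj (d.vs d.i) d.gv := by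
    rw [← SimpleGraph.mem_edgeSet, ← d.hpi1]; exact d.hpi1edge
  exact h.ne

lemma aux_vs0_ne_vsi : d.vs 0 ≠ d.vs d.i := by
  intro h
  have h1 := d.hvsinj 0 d.i (Nat.zero_le _) le_rfl h
  have := d.hi1
  omega

lemma aux_fv_ne_vs (hac : C.IsAcyclic) (t : ℕ) (ht : t ≤ d.i) : d.fv ≠ d.vs t := by
  intro h
  rcases Nat.eq_zero_or_pos t with rfl | h1
  · exact aux_vs0_ne_fv d h.symm
  · have hadj : C.Adj (d.vs 0) (d.vs t) := by
      have := d.hp0edge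
      rw [d.hp0, h, SimpleGraph.mem_edgeSet] at this
      exact this
    refine aux_bridge hac hadj ?_
    have he : ∀ r, 1 ≤ r → r ≤ d.i → s(d.vs 0, d.vs t) ≠ d.p r := by
      intro r hr1 hr2
      rw [← h, ← d.hp0]
      exact aux_p0_ne_p d r hr1 hr2
    exact aux_chain_del d _ he 0 t (Nat.zero_le _) ht

lemma aux_gv_ne_vs (hac : C.IsAcyclic) (t : ℕ) (ht : t ≤ d.i) : d.gv ≠ d.vs t := by
  intro h
  rcases eq_or_ne t d.i with rfl | hne
  · exact aux_vsi_ne_gv d h.symm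
  · have hadj : C.Adj (d.vs d.i) (d.vs t) := by
      have := d.hpi1edge
      rw [d.hpi1, h, SimpleGraph.mem_edgeSet] at this
      exact this
    refine aux_bridge hac hadj ?_
    have he : ∀ r, 1 ≤ r → r ≤ d.i → s(d.vs d.i, d.vs t) ≠ d.p r := by
      intro r hr1 hr2
      rw [← h, ← d.hpi1]
      exact aux_pi1_ne_p d r hr1 hr2
    exact (aux_chain_del d _ he t d.i ht le_rfl).symm

lemma aux_p0_ne_pi1 (hac : C.IsAcyclic) : d.p 0 ≠ d.p (d.i + 1) := by
  rw [d.hp0, d.hpi1]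
  intro h
  rw [Sym2.eq_iff] at h
  rcases h with ⟨h1, _⟩ | ⟨_, h2⟩
  · have h3 := d.hvsinj 0 d.i (Nat.zero_le _) le_rfl h1
    have := d.hi1
    omega
  · exact aux_fv_ne_vs d hac d.i le_rfl h2

lemma aux_N2_not_edge (hac : C.IsAcyclic) : s(d.vs 1, d.fv) ∉ C.edgeSet := by
  intro hmem
  rw [SimpleGraph.mem_edgeSet] at hmem
  refine aux_bridge hac hmem ?_
  have h1 : (C.deleteEdges {s(d.vs 1, d.fv)}).Adj (d.vs 1) (d.vs 0) := by
    rw [SimpleGraph.deleteEdges_adj]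
    refine ⟨(aux_adj_step d 0 d.hi1).symm, ?_⟩
    rw [Set.mem_singleton_iff]
    intro hh
    rw [Sym2.eq_iff] at hh
    rcases hh with ⟨_, h2'⟩ | ⟨h1', _⟩
    · exact aux_vs0_ne_fv d h2'
    · exact aux_fv_ne_vs d hac 1 d.hi1 h1'.symm
  have h2 : (C.deleteEdges {s(d.vs 1, d.fv)}).Adj (d.vs 0) d.fv := by
    rw [SimpleGraph.deleteEdges_adj]
    constructor
    · rw [← SimpleGraph.mem_edgeSet, ← d.hp0]; exact d.hp0edge
    · rw [Set.mem_singleton_iff]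
      intro hh
      rw [Sym2.eq_iff] at hh
      rcases hh with ⟨h1', _⟩ | ⟨h1', _⟩
      · have := d.hvsinj 0 1 (Nat.zero_le _) d.hi1 h1'
        omega
      · exact aux_vs0_ne_fv d h1'
  exact h1.reachable.trans h2.reachable

lemma aux_N3_not_edge (hac : C.IsAcyclic) : s(d.vs 0, d.gv) ∉ C.edgeSet := by
  intro hmem
  rw [SimpleGraph.mem_edgeSet] at hmem
  refine aux_bridge hac hmem ?_
  have he : ∀ r, 1 ≤ r → r ≤ d.i → s(d.vs 0, d.gv) ≠ d.p r := by
    intro r hr1 hr2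
    rw [d.hpe r hr1 hr2]
    intro hh
    rw [Sym2.eq_iff] at hh
    rcases hh with ⟨_, h2'⟩ | ⟨_, h2'⟩
    · exact aux_gv_ne_vs d hac r hr2 h2'
    · exact aux_gv_ne_vs d hac (r - 1) (by omega) h2'
  have h1 : (C.deleteEdges {s(d.vs 0, d.gv)}).Reachable (d.vs 0) (d.vs d.i) :=
    aux_chain_del d _ he 0 d.i (Nat.zero_le _) le_rfl
  have h2 : (C.deleteEdges {s(d.vs 0, d.gv)}).Adj (d.vs d.i) d.gv := by
    rw [SimpleGraph.deleteEdges_adj]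
    constructor
    · rw [← SimpleGraph.mem_edgeSet, ← d.hpi1]; exact d.hpi1edge
    · rw [Set.mem_singleton_iff]
      intro hh
      rw [Sym2.eq_iff] at hh
      rcases hh with ⟨h1', _⟩ | ⟨_, h2'⟩
      · have h3 := d.hvsinj d.i 0 le_rfl (Nat.zero_le _) h1'
        have := d.hi1
        omega
      · exact aux_gv_ne_vs d hac 0 (Nat.zero_le _) h2'
  exact h1.trans h2.reachable

lemma aux_N1_not_edge (hac : C.IsAcyclic) (hi2 : 2 ≤ d.i) : s(d.vs 0, d.vs d.i) ∉ C.edgeSet := by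
  intro hmem
  rw [SimpleGraph.mem_edgeSet] at hmem
  refine aux_bridge hac hmem ?_
  have he : ∀ r, 1 ≤ r → r ≤ d.i → s(d.vs 0, d.vs d.i) ≠ d.p r := by
    intro r hr1 hr2
    rw [d.hpe r hr1 hr2]
    intro hh
    rw [Sym2.eq_iff] at hh
    rcases hh with ⟨h1', h2'⟩ | ⟨h1', _⟩
    · have q1 := d.hvsinj 0 (r - 1) (Nat.zero_le _) (by omega) h1'
      have q2 := d.hvsinj d.i r le_rfl hr2 h2'
      omega
    · have q1 := d.hvsinj 0 r (Nat.zero_le _) hr2 h1'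
      omega
  exact aux_chain_del d _ he 0 d.i (Nat.zero_le _) le_rfl

lemma aux_f_ne_N1 (hac : C.IsAcyclic) (f : Sym2 W) (hf : f ∈ C.edgeSet)
    (hoff : ∀ t, 1 ≤ t → t ≤ d.i → f ≠ d.p t) : f ≠ s(d.vs 0, d.vs d.i) := by
  intro h
  rcases lt_or_ge d.i 2 with h2 | h2
  · have hi : d.i = 1 := by have := d.hi1; omega
    apply hoff 1 le_rfl d.hi1
    rw [h, aux_pe1 d, hi]
  · exact aux_N1_not_edge d hac h2 (h ▸ hf)

lemma aux_adj'_old {a b : W} (h : C.Adj a b) (h1 : s(a, b) ≠ d.p 1) (h0 : s(a, b) ≠ d.p 0)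
    (hi : s(a, b) ≠ d.p (d.i + 1)) : d.shifted.Adj a b := by
  rw [BranchData.shifted, SimpleGraph.fromEdgeSet_adj]
  refine ⟨Or.inl (Set.mem_diff _ |>.mpr ⟨h, ?_⟩), h.ne⟩
  simp only [Set.mem_insert_iff, Set.mem_singleton_iff, not_or]
  exact ⟨h1, h0, hi⟩

lemma aux_adj'_N1 : d.shifted.Adj (d.vs 0) (d.vs d.i) := by
  rw [BranchData.shifted, SimpleGraph.fromEdgeSet_adj]
  exact ⟨Or.inr (by simp), aux_vs0_ne_vsi d⟩

lemma aux_adj'_N2 (hac : C.IsAcyclic) : d.shifted.Adj (d.vs 1) d.fv := by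
  rw [BranchData.shifted, SimpleGraph.fromEdgeSet_adj]
  exact ⟨Or.inr (by simp), fun hh => aux_fv_ne_vs d hac 1 d.hi1 hh.symm⟩

lemma aux_adj'_N3 (hac : C.IsAcyclic) : d.shifted.Adj (d.vs 0) d.gv := by
  rw [BranchData.shifted, SimpleGraph.fromEdgeSet_adj]
  exact ⟨Or.inr (by simp), fun hh => aux_gv_ne_vs d hac 0 (Nat.zero_le _) hh.symm⟩

lemma aux_adj'_cases {a b : W} (h : d.shifted.Adj a b) :
    (C.Adj a b ∧ s(a, b) ≠ d.p 1 ∧ s(a, b) ≠ d.p 0 ∧ s(a, b) ≠ d.p (d.i + 1)) ∨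
      s(a, b) = s(d.vs 0, d.vs d.i) ∨ s(a, b) = s(d.vs 1, d.fv) ∨
        s(a, b) = s(d.vs 0, d.gv) := by
  rw [BranchData.shifted, SimpleGraph.fromEdgeSet_adj] at h
  rcases h.1 with h' | h'
  · left
    simp only [Set.mem_diff, Set.mem_insert_iff, Set.mem_singleton_iff, not_or,
      SimpleGraph.mem_edgeSet] at h'
    exact ⟨h'.1, h'.2.1, h'.2.2.1, h'.2.2.2⟩
  · right
    simpa using h'

end AuxBranch

section AuxTransfer

variable {W : Type*} {C : SimpleGraph W} {x y : Sym2 W} (d : BranchData C x y)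

lemma aux_transfer (hT : C.IsTree) (f f' : Sym2 W) (hf : f ∈ C.edgeSet)
    (hoff : ∀ t, 1 ≤ t → t ≤ d.i → f ≠ d.p t)
    (hcase : (f' = f ∧ f ≠ d.p 0 ∧ f ≠ d.p (d.i + 1)) ∨
      (f' = s(d.vs 1, d.fv) ∧ f = d.p 0) ∨ (f' = s(d.vs 0, d.gv) ∧ f = d.p (d.i + 1))) :
    (∀ a b : W, (C.deleteEdges {f}).Reachable a b ↔
        (d.shifted.deleteEdges {f'}).Reachable a b) ∧
      ∀ a b : W, d.shifted.Reachable a b := by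
  have hac : C.IsAcyclic := hT.2
  have hf'p : ∀ r, 1 ≤ r → r ≤ d.i → f' ≠ d.p r := by
    intro r h1 h2
    rcases hcase with ⟨rfl, _⟩ | ⟨rfl, _⟩ | ⟨rfl, _⟩
    · exact hoff r h1 h2
    · exact fun hh => aux_N2_not_edge d hac (by rw [hh]; exact d.hpedge r h1 h2)
    · exact fun hh => aux_N3_not_edge d hac (by rw [hh]; exact d.hpedge r h1 h2)
  have hf'N1 : f' ≠ s(d.vs 0, d.vs d.i) := by
    rcases hcase with ⟨rfl, _⟩ | ⟨rfl, _⟩ | ⟨rfl, _⟩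
    · exact aux_f_ne_N1 d hac _ hf hoff
    · intro hh
      rw [Sym2.eq_iff] at hh
      rcases hh with ⟨h1', _⟩ | ⟨_, h2'⟩
      · have := d.hvsinj 1 0 d.hi1 (Nat.zero_le _) h1'
        omega
      · exact aux_fv_ne_vs d hac 0 (Nat.zero_le _) h2'
    · intro hh
      rw [Sym2.eq_iff] at hh
      rcases hh with ⟨_, h2'⟩ | ⟨h1', _⟩
      · exact aux_gv_ne_vs d hac d.i le_rfl h2'
      · exact aux_vs0_ne_vsi d h1'
  have hf'N2 : f ≠ d.p 0 → f' ≠ s(d.vs 1, d.fv) := by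
    intro h0
    rcases hcase with ⟨rfl, _⟩ | ⟨_, hfp⟩ | ⟨rfl, _⟩
    · exact fun hh => aux_N2_not_edge d hac (hh ▸ hf)
    · exact absurd hfp h0
    · intro hh
      rw [Sym2.eq_iff] at hh
      rcases hh with ⟨h1', _⟩ | ⟨h1', _⟩
      · have := d.hvsinj 0 1 (Nat.zero_le _) d.hi1 h1'
        omega
      · exact aux_vs0_ne_fv d h1'
  have hf'N3 : f ≠ d.p (d.i + 1) → f' ≠ s(d.vs 0, d.gv) := by
    intro h0
    rcases hcase with ⟨rfl, _⟩ | ⟨rfl, _⟩ | ⟨_, hfp⟩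
    · exact fun hh => aux_N3_not_edge d hac (hh ▸ hf)
    · intro hh
      rw [Sym2.eq_iff] at hh
      rcases hh with ⟨h1', _⟩ | ⟨_, h2'⟩
      · have := d.hvsinj 1 0 d.hi1 (Nat.zero_le _) h1'
        omega
      · exact aux_vs0_ne_fv d h2'.symm
    · exact absurd hfp h0
  have step' : ∀ r, 2 ≤ r → r ≤ d.i →
      (d.shifted.deleteEdges {f'}).Adj (d.vs (r - 1)) (d.vs r) := by
    intro r h2 hi
    rw [SimpleGraph.deleteEdges_adj]
    constructor
    · refine aux_adj'_old d ?_ ?_ ?_ ?_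
      · have := d.hpedge r (by omega) hi
        rwa [d.hpe r (by omega) hi, SimpleGraph.mem_edgeSet] at this
      · rw [← d.hpe r (by omega) hi]
        intro hh
        have := aux_p_inj d r 1 (by omega) hi le_rfl d.hi1 hh
        omega
      · rw [← d.hpe r (by omega) hi]
        exact (aux_p0_ne_p d r (by omega) hi).symm
      · rw [← d.hpe r (by omega) hi]
        exact (aux_pi1_ne_p d r (by omega) hi).symm
    · rw [Set.mem_singleton_iff, ← d.hpe r (by omega) hi]
      exact (hf'p r (by omega) hi).symm
  have chain1' : ∀ s t, 1 ≤ s → s ≤ t → t ≤ d.i →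
      (d.shifted.deleteEdges {f'}).Reachable (d.vs s) (d.vs t) := by
    intro s t h1 hst ht
    apply aux_chain d.vs s t hst
    intro r hr1 hr2
    have hstep := step' (r + 1) (by omega) (by omega)
    rw [Nat.add_sub_cancel] at hstep
    exact hstep.reachable
  have hN1' : (d.shifted.deleteEdges {f'}).Adj (d.vs 0) (d.vs d.i) := by
    rw [SimpleGraph.deleteEdges_adj]
    exact ⟨aux_adj'_N1 d, by rw [Set.mem_singleton_iff]; exact fun hh => hf'N1 hh.symm⟩
  have reach0 : ∀ t, t ≤ d.i → (d.shifted.deleteEdges {f'}).Reachable (d.vs 0) (d.vs t) := by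
    intro t ht
    rcases Nat.eq_zero_or_pos t with rfl | h1
    · exact SimpleGraph.Reachable.refl _
    · exact hN1'.reachable.trans (chain1' t d.i h1 ht le_rfl).symm
  have hN2' : f ≠ d.p 0 → (d.shifted.deleteEdges {f'}).Adj (d.vs 1) d.fv := by
    intro h0
    rw [SimpleGraph.deleteEdges_adj]
    exact ⟨aux_adj'_N2 d hac, by rw [Set.mem_singleton_iff]; exact fun hh => hf'N2 h0 hh.symm⟩
  have hN3' : f ≠ d.p (d.i + 1) → (d.shifted.deleteEdges {f'}).Adj (d.vs 0) d.gv := by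
    intro h0
    rw [SimpleGraph.deleteEdges_adj]
    exact ⟨aux_adj'_N3 d hac, by rw [Set.mem_singleton_iff]; exact fun hh => hf'N3 h0 hh.symm⟩
  have T1 : ∀ a b : W, (C.deleteEdges {f}).Adj a b →
      (d.shifted.deleteEdges {f'}).Reachable a b := by
    intro a b hab
    rw [SimpleGraph.deleteEdges_adj, Set.mem_singleton_iff] at hab
    obtain ⟨hC, hnef⟩ := hab
    by_cases h1 : s(a, b) = d.p 1
    · exact aux_reach_sym2 (h1.trans (aux_pe1 d)) (reach0 1 d.hi1)
    by_cases h0 : s(a, b) = d.p 0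
    · have hfp0 : f ≠ d.p 0 := fun hh => hnef (h0.trans hh.symm)
      exact aux_reach_sym2 (h0.trans d.hp0) ((reach0 1 d.hi1).trans (hN2' hfp0).reachable)
    by_cases hi1e : s(a, b) = d.p (d.i + 1)
    · have hfpi : f ≠ d.p (d.i + 1) := fun hh => hnef (hi1e.trans hh.symm)
      exact aux_reach_sym2 (hi1e.trans d.hpi1)
        ((reach0 d.i le_rfl).symm.trans (hN3' hfpi).reachable)
    · refine SimpleGraph.Adj.reachable ?_
      rw [SimpleGraph.deleteEdges_adj]
      refine ⟨aux_adj'_old d hC h1 h0 hi1e, ?_⟩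
      rw [Set.mem_singleton_iff]
      intro hh
      rcases hcase with ⟨rfl, _⟩ | ⟨rfl, _⟩ | ⟨rfl, _⟩
      · exact hnef hh
      · exact aux_N2_not_edge d hac (by rw [← hh]; exact hC)
      · exact aux_N3_not_edge d hac (by rw [← hh]; exact hC)
  have T2 : ∀ a b : W, (d.shifted.deleteEdges {f'}).Adj a b →
      (C.deleteEdges {f}).Reachable a b := by
    intro a b hab
    rw [SimpleGraph.deleteEdges_adj, Set.mem_singleton_iff] at hab
    obtain ⟨hC', hnef'⟩ := hab
    rcases aux_adj'_cases d hC' with ⟨hC, hn1, hn0, hni⟩ | hN1e | hN2e | hN3e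
    · refine SimpleGraph.Adj.reachable ?_
      rw [SimpleGraph.deleteEdges_adj, Set.mem_singleton_iff]
      refine ⟨hC, ?_⟩
      rcases hcase with ⟨rfl, _⟩ | ⟨_, rfl⟩ | ⟨_, rfl⟩
      · exact hnef'
      · exact hn0
      · exact hni
    · exact aux_reach_sym2 hN1e (aux_chain_del d f hoff 0 d.i (Nat.zero_le _) le_rfl)
    · have hfp0 : f ≠ d.p 0 := by
        intro hh
        rcases hcase with ⟨rfl, h0, _⟩ | ⟨hf'eq, _⟩ | ⟨_, hfeq⟩
        · exact h0 hh
        · exact hnef' (hN2e.trans hf'eq.symm)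
        · exact aux_p0_ne_pi1 d hac (hh.symm.trans hfeq)
      refine aux_reach_sym2 hN2e ?_
      have e1 : (C.deleteEdges {f}).Adj (d.vs 1) (d.vs 0) := by
        rw [SimpleGraph.deleteEdges_adj, Set.mem_singleton_iff]
        refine ⟨(aux_adj_step d 0 d.hi1).symm, ?_⟩
        have hsw : s(d.vs 1, d.vs 0) = d.p 1 := by rw [aux_pe1 d, Sym2.eq_swap]
        rw [hsw]
        exact (hoff 1 le_rfl d.hi1).symm
      have e2 : (C.deleteEdges {f}).Adj (d.vs 0) d.fv := by
        rw [SimpleGraph.deleteEdges_adj, Set.mem_singleton_iff]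
        constructor
        · rw [← SimpleGraph.mem_edgeSet, ← d.hp0]; exact d.hp0edge
        · rw [← d.hp0]
          exact hfp0.symm
      exact e1.reachable.trans e2.reachable
    · have hfpi : f ≠ d.p (d.i + 1) := by
        intro hh
        rcases hcase with ⟨rfl, _, h0⟩ | ⟨_, hfeq⟩ | ⟨hf'eq, _⟩
        · exact h0 hh
        · exact aux_p0_ne_pi1 d hac (hfeq.symm.trans hh)
        · exact hnef' (hN3e.trans hf'eq.symm)
      refine aux_reach_sym2 hN3e ?_
      have e2 : (C.deleteEdges {f}).Adj (d.vs d.i) d.gv := by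
        rw [SimpleGraph.deleteEdges_adj, Set.mem_singleton_iff]
        constructor
        · rw [← SimpleGraph.mem_edgeSet, ← d.hpi1]; exact d.hpi1edge
        · rw [← d.hpi1]
          exact hfpi.symm
      exact (aux_chain_del d f hoff 0 d.i (Nat.zero_le _) le_rfl).trans e2.reachable
  refine ⟨fun a b => ⟨aux_reach_trans T1, aux_reach_trans T2⟩, ?_⟩
  intro a b
  refine aux_reach_trans ?_ (hT.1.preconnected a b)
  intro a b hadj
  by_cases h : s(a, b) = f
  · rcases hcase with ⟨_, h0, hi1e⟩ | ⟨_, rfl⟩ | ⟨_, rfl⟩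
    · refine SimpleGraph.Adj.reachable (aux_adj'_old d hadj ?_ ?_ ?_)
      · rw [h]; exact hoff 1 le_rfl d.hi1
      · rw [h]; exact h0
      · rw [h]; exact hi1e
    · refine aux_reach_sym2 (h.trans d.hp0) ?_
      have r1 : d.shifted.Reachable (d.vs 0) (d.vs 1) :=
        (reach0 1 d.hi1).mono (SimpleGraph.deleteEdges_le _)
      exact r1.trans (aux_adj'_N2 d hac).reachable
    · refine aux_reach_sym2 (h.trans d.hpi1) ?_
      exact (aux_adj'_N1 d).reachable.symm.trans (aux_adj'_N3 d hac).reachable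
  · exact (T1 a b (by rw [SimpleGraph.deleteEdges_adj, Set.mem_singleton_iff]; exact ⟨hadj, h⟩)).mono
      (SimpleGraph.deleteEdges_le _)

lemma aux_core {V : Type*} [Fintype V] (w : V → V → ℝ) (C C' : SimpleGraph W) (φ : V → W)
    {z1 z2 z1' z2' : W}
    (hbr : ¬(C.deleteEdges {s(z1, z2)}).Reachable z1 z2)
    (hbr' : ¬(C'.deleteEdges {s(z1', z2')}).Reachable z1' z2')
    (hconn : ∀ a b : W, C.Reachable a b) (hconn' : ∀ a b : W, C'.Reachable a b)
    (hiff : ∀ a b : W, (C.deleteEdges {s(z1, z2)}).Reachable a b ↔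
      (C'.deleteEdges {s(z1', z2')}).Reachable a b) :
    bWidth w C' φ s(z1', z2') = bWidth w C φ s(z1, z2) := by
  have hpass : ∀ a b : W, passesThrough C s(z1, z2) a b ↔ passesThrough C' s(z1', z2') a b := by
    intro a b
    rw [aux_passes_iff hbr (hconn a b), aux_passes_iff hbr' (hconn' a b)]
    exact not_congr (hiff a b)
  have hR : REdges w C' φ s(z1', z2') = REdges w C φ s(z1, z2) := by
    ext e
    simp only [REdges, Set.mem_setOf_eq]
    constructor
    · rintro ⟨u, v, he, hw, hp⟩
      exact ⟨u, v, he, hw, (hpass _ _).mpr hp⟩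
    · rintro ⟨u, v, he, hw, hp⟩
      exact ⟨u, v, he, hw, (hpass _ _).mp hp⟩
  rw [bWidth, bWidth, hR]

end AuxTransfer

/-- Let `(C',φ)` be the branch shift of `x` to `y` applied to a tree
position `(C,φ)` of `G`, where `x` and `y` are nonadjacent edges of `C`.  Then every edge of
`C` that does not lie on the simple path `p 1, …, p i` from `x` to `y` has the same width in
`(C',φ)` (under the canonical correspondence of edges, which moves `p 0` to `s(vs 1, fv)`
and `p (i+1)` to `s(vs 0, gv)` and fixes every other non-path edge) as it had in `(C,φ)`. -/
theorem offpath_width_unchanged {V W : Type*} [Fintype V] [Fintype W]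
    (w : V → V → ℝ) (hsymm : ∀ u v, w u v = w v u) (hnn : ∀ u v, 0 ≤ w u v)
    (hdiag : ∀ v, w v v = 0)
    (C : SimpleGraph W) (φ : V → W) (htp : IsTreePosition C φ)
    (x y : Sym2 W) (d : BranchData C x y) :
    ∀ f ∈ C.edgeSet, (∀ t, 1 ≤ t → t ≤ d.i → f ≠ d.p t) →
      bWidth w d.shifted φ
          (if f = d.p 0 then s(d.vs 1, d.fv)
           else if f = d.p (d.i + 1) then s(d.vs 0, d.gv)
           else f) =
        bWidth w C φ f := by
  intro f hf hoff
  have hT : C.IsTree := htp.1.1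
  have hac : C.IsAcyclic := hT.2
  have hconn : ∀ a b : W, C.Reachable a b := fun a b => hT.1.preconnected a b
  by_cases h0 : f = d.p 0
  · rw [if_pos h0]
    subst h0
    obtain ⟨hiff, hconn'⟩ := aux_transfer d hT (d.p 0) s(d.vs 1, d.fv) hf hoff
      (Or.inr (Or.inl ⟨rfl, rfl⟩))
    rw [d.hp0] at hiff ⊢
    refine aux_core w C d.shifted φ ?_ ?_ hconn hconn' hiff
    · refine aux_bridge hac ?_
      rw [← SimpleGraph.mem_edgeSet, ← d.hp0]; exact d.hp0edge
    · intro hr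
      have h1 : (C.deleteEdges {s(d.vs 0, d.fv)}).Reachable (d.vs 1) d.fv := (hiff _ _).mpr hr
      have h2 : (C.deleteEdges {s(d.vs 0, d.fv)}).Adj (d.vs 0) (d.vs 1) := by
        rw [SimpleGraph.deleteEdges_adj, Set.mem_singleton_iff]
        refine ⟨aux_adj_step d 0 d.hi1, ?_⟩
        rw [← aux_pe1 d, ← d.hp0]
        exact fun hh => d.hp0p1 hh.symm
      have hbrC : ¬(C.deleteEdges {s(d.vs 0, d.fv)}).Reachable (d.vs 0) d.fv := by
        refine aux_bridge hac ?_
        rw [← SimpleGraph.mem_edgeSet, ← d.hp0]; exact d.hp0edge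
      exact hbrC (h2.reachable.trans h1)
  · by_cases hi1e : f = d.p (d.i + 1)
    · rw [if_neg h0, if_pos hi1e]
      subst hi1e
      obtain ⟨hiff, hconn'⟩ := aux_transfer d hT (d.p (d.i + 1)) s(d.vs 0, d.gv) hf hoff
        (Or.inr (Or.inr ⟨rfl, rfl⟩))
      rw [d.hpi1] at hiff ⊢
      refine aux_core w C d.shifted φ ?_ ?_ hconn hconn' hiff
      · refine aux_bridge hac ?_
        rw [← SimpleGraph.mem_edgeSet, ← d.hpi1]; exact d.hpi1edge
      · intro hr
        have h1 : (C.deleteEdges {s(d.vs d.i, d.gv)}).Reachable (d.vs 0) d.gv :=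
          (hiff _ _).mpr hr
        have he : ∀ r, 1 ≤ r → r ≤ d.i → s(d.vs d.i, d.gv) ≠ d.p r := by
          intro r h1' h2'
          rw [← d.hpi1]
          exact aux_pi1_ne_p d r h1' h2'
        have h2 : (C.deleteEdges {s(d.vs d.i, d.gv)}).Reachable (d.vs d.i) (d.vs 0) :=
          (aux_chain_del d _ he 0 d.i (Nat.zero_le _) le_rfl).symm
        have hbrC : ¬(C.deleteEdges {s(d.vs d.i, d.gv)}).Reachable (d.vs d.i) d.gv := by
          refine aux_bridge hac ?_
          rw [← SimpleGraph.mem_edgeSet, ← d.hpi1]; exact d.hpi1edge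
        exact hbrC (h2.trans h1)
    · rw [if_neg h0, if_neg hi1e]
      obtain ⟨z1, z2, hz⟩ :=
        Sym2.ind (f := fun e => ∃ z1 z2, e = s(z1, z2)) (fun u v => ⟨u, v, rfl⟩) f
      subst hz
      obtain ⟨hiff, hconn'⟩ := aux_transfer d hT s(z1, z2) s(z1, z2) hf hoff
        (Or.inl ⟨rfl, h0, hi1e⟩)
      refine aux_core w C d.shifted φ ?_ ?_ hconn hconn' hiff
      · exact aux_bridge hac ((SimpleGraph.mem_edgeSet C).mp hf)
      · intro hr
        exact aux_bridge hac ((SimpleGraph.mem_edgeSet C).mp hf) ((hiff _ _).mpr hr)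
end
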